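/- arXiv:2502.15181 — 6 statements merged into one kernel-verified Lean document; each statement's English description precedes it below -/
import Mathlib

section
/- Let q be an acyclic natural join query with connected join graph G_q, where each edge {R,S} of G_q is weighted by w(R,S) = |attr(R) ∩ attr(S)|. Then every maximum spanning tree of the weighted graph G_q is a join tree of q. -/
namespace JoinQuery

universe u

variable {ι : Type} {α : Type}

/-- A *tuple* over a finite set `X` of attributes, with values in the domain `D`:
a function assigning a domain value to each attribute of `X`. -/
def Tuple (D : Type u) {α : Type} (X : Finset α) : Type u := {a // a ∈ X} → D

/-- Projection: the restriction of a tuple over `X` to a subset `Y ⊆ X` of the attributes. -/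
def restrict {D : Type u} {X Y : Finset α} (h : Y ⊆ X) (t : Tuple D X) : Tuple D Y :=
  fun a => t ⟨a.1, h a.2⟩

/-- A database instance for the natural join query whose relation symbols are the elements
of `ι` with attribute sets given by `attr`: a finite set of tuples for every relation. -/
structure Inst (attr : ι → Finset α) (D : Type u) where
  rel : ∀ R : ι, Set (Tuple D (attr R))
  finite : ∀ R : ι, (rel R).Finite

/-- The set of attributes of the (sub)query given by the set `S` of relations. -/
def attrsOf [DecidableEq α] (attr : ι → Finset α) (S : Finset ι) : Finset α :=
  S.biUnion attr

theorem attr_subset_attrsOf [DecidableEq α] (attr : ι → Finset α) {S : Finset ι} {R : ι}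
    (hR : R ∈ S) : attr R ⊆ attrsOf attr S :=
  Finset.subset_biUnion_of_mem attr hR

theorem attrsOf_mono [DecidableEq α] (attr : ι → Finset α) {S₁ S₂ : Finset ι} (h : S₁ ⊆ S₂) :
    attrsOf attr S₁ ⊆ attrsOf attr S₂ :=
  Finset.biUnion_subset_biUnion_of_subset_left attr h

/-- The output of the natural join of the relations in `S`, on the instance `I`:
all tuples over the attributes of `S` whose restriction to each relation `R ∈ S`
belongs to `I.rel R`. -/
def output [DecidableEq α] {D : Type u} (attr : ι → Finset α) (I : Inst attr D)
    (S : Finset ι) : Set (Tuple D (attrsOf attr S)) :=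
  {t | ∀ (R : ι) (hR : R ∈ S), restrict (attr_subset_attrsOf attr hR) t ∈ I.rel R}

/-- The output `q(I)` of the full query (the natural join of all relations). -/
def fullOutput [Fintype ι] [DecidableEq α] {D : Type u} (attr : ι → Finset α)
    (I : Inst attr D) : Set (Tuple D (attrsOf attr Finset.univ)) :=
  output attr I Finset.univ

/-- An instance is *fully reduced* if every relation equals the projection of the
full output onto its attributes. -/
def FullyReduced [Fintype ι] [DecidableEq α] {D : Type u} (attr : ι → Finset α)
    (I : Inst attr D) : Prop :=
  ∀ R : ι,
    I.rel R = restrict (attr_subset_attrsOf attr (Finset.mem_univ R)) '' fullOutput attr I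

/-- The subjoin given by the set `S` of relations is *safe*: on every fully reduced
instance, its output is the projection of the full output onto its attributes. -/
def Safe [Fintype ι] [DecidableEq α] (attr : ι → Finset α) (S : Finset ι) : Prop :=
  ∀ (D : Type u) (I : Inst attr D), FullyReduced attr I →
    output attr I S =
      restrict (attrsOf_mono attr (Finset.subset_univ S)) '' fullOutput attr I

/-- The *join graph* of the query: vertices are the relations, two distinct relations
being adjacent iff they share an attribute. -/
def joinGraph [DecidableEq α] (attr : ι → Finset α) : SimpleGraph ι where
  Adj R S := R ≠ S ∧ (attr R ∩ attr S).Nonempty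
  symm := by
    constructor
    intro R S h
    exact ⟨h.1.symm, by rw [Finset.inter_comm]; exact h.2⟩
  loopless := by constructor; intro R h; exact h.1 rfl

/-- `T` is a spanning tree of the graph `G` (a tree on the same vertex set all of whose
edges are edges of `G`). -/
def IsSpanningTree (G T : SimpleGraph ι) : Prop :=
  T ≤ G ∧ T.IsTree

/-- `T` is a *join tree* of the query: a spanning tree of the join graph such that, for
every attribute `A` (occurring in the query), the relations containing `A` induce a
connected subgraph of `T`. -/
def IsJoinTree [DecidableEq α] (attr : ι → Finset α) (T : SimpleGraph ι) : Prop :=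
  IsSpanningTree (joinGraph attr) T ∧
    ∀ A : α, (∃ R : ι, A ∈ attr R) → (T.induce {R : ι | A ∈ attr R}).Connected

/-- The query is (α-)acyclic iff it has a join tree. -/
def Acyclic [DecidableEq α] (attr : ι → Finset α) : Prop :=
  ∃ T : SimpleGraph ι, IsJoinTree attr T

/-- The weight of an edge `{R, S}`: the number of shared attributes `|attr R ∩ attr S|`. -/
def edgeWeight [DecidableEq α] (attr : ι → Finset α) : Sym2 ι → ℕ :=
  Sym2.lift ⟨fun R S => (attr R ∩ attr S).card, fun R S => by simp [Finset.inter_comm]⟩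

/-- The total weight of (the edges of) a graph `T`. -/
noncomputable def weight [DecidableEq α] (attr : ι → Finset α) (T : SimpleGraph ι) : ℕ :=
  ∑ᶠ e ∈ T.edgeSet, edgeWeight attr e

/-- `T` is a maximum spanning tree of the weighted join graph. -/
def IsMaxSpanningTree [DecidableEq α] (attr : ι → Finset α) (T : SimpleGraph ι) : Prop :=
  IsSpanningTree (joinGraph attr) T ∧
    ∀ T' : SimpleGraph ι, IsSpanningTree (joinGraph attr) T' →
      weight attr T' ≤ weight attr T

/-- γ-acyclicity: α-acyclicity together with the absence of a γ-cycle of size 3,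
i.e. of three distinct relations `R, S, T` and three distinct attributes `x, y, z`
with `x, y ∈ attr R`, `y, z ∈ attr S` and `x, y, z ∈ attr T`. -/
def GammaAcyclic [DecidableEq α] (attr : ι → Finset α) : Prop :=
  Acyclic attr ∧
    ¬ ∃ (R S T : ι) (x y z : α),
        R ≠ S ∧ R ≠ T ∧ S ≠ T ∧ x ≠ y ∧ x ≠ z ∧ y ≠ z ∧
        x ∈ attr R ∧ y ∈ attr R ∧ y ∈ attr S ∧ z ∈ attr S ∧
        x ∈ attr T ∧ y ∈ attr T ∧ z ∈ attr T

/-- A *connected subjoin*: a nonempty set of relations inducing a connected subgraph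
of the join graph. -/
def ConnectedSubjoin [DecidableEq α] (attr : ι → Finset α) (S : Finset ι) : Prop :=
  S.Nonempty ∧ ((joinGraph attr).induce (S : Set ι)).Connected

/-- The number of edges of `T` whose both endpoints contain the attribute `A`. -/
noncomputable def eCount (attr : ι → Finset α) (T : SimpleGraph ι) (A : α) : ℕ :=
  {e ∈ T.edgeSet | ∀ R ∈ e, A ∈ attr R}.ncard

/-- The number of relations whose attribute set contains `A`. -/
noncomputable def nCount (attr : ι → Finset α) (A : α) : ℕ :=
  {R : ι | A ∈ attr R}.ncard

/-- A (binary) join expression over the relation symbols `ι`. -/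
inductive JoinExpr (ι : Type) : Type where
  | leaf : ι → JoinExpr ι
  | node : JoinExpr ι → JoinExpr ι → JoinExpr ι

namespace JoinExpr

/-- The list of leaves of a join expression. -/
def leaves {ι : Type} : JoinExpr ι → List ι
  | leaf R => [R]
  | node l r => l.leaves ++ r.leaves

/-- The set of relations appearing in a join expression. -/
def rels {ι : Type} [DecidableEq ι] : JoinExpr ι → Finset ι
  | leaf R => {R}
  | node l r => l.rels ∪ r.rels

/-- The leaves of the expression are exactly the relations of the query,
each occurring once. -/
def Complete {ι : Type} (θ : JoinExpr ι) : Prop :=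
  θ.leaves.Nodup ∧ ∀ R : ι, R ∈ θ.leaves

/-- The expression has no Cartesian products: at every internal node, the relations of the
two subtrees are joined by at least one edge of `G`. -/
def ConnectedExpr {ι : Type} [DecidableEq ι] (G : SimpleGraph ι) : JoinExpr ι → Prop
  | leaf _ => True
  | node l r =>
      (∃ R ∈ l.rels, ∃ S ∈ r.rels, G.Adj R S) ∧ ConnectedExpr G l ∧ ConnectedExpr G r

/-- The expression is *monotone* on the instance `I`: at every internal node
`θ' = θ'₁ ⋈ θ'₂`, the output of each child equals the projection of the output of the
node onto the child's attributes (no tuple of either input is removed by the join). -/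
def MonotoneOn {ι α : Type} [DecidableEq ι] [DecidableEq α] {D : Type u}
    (attr : ι → Finset α) (I : Inst attr D) : JoinExpr ι → Prop
  | leaf _ => True
  | node l r =>
      output attr I l.rels =
        restrict (attrsOf_mono attr Finset.subset_union_left) ''
          output attr I (l.rels ∪ r.rels) ∧
      output attr I r.rels =
        restrict (attrsOf_mono attr Finset.subset_union_right) ''
          output attr I (l.rels ∪ r.rels) ∧
      MonotoneOn attr I l ∧ MonotoneOn attr I r

end JoinExpr

/-- Two tuples (over possibly different attribute sets) *agree* on their common attributes. -/
def AgreeOn {α : Type} {D : Type u} {X Y : Finset α} (t : Tuple D X) (s : Tuple D Y) : Prop :=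
  ∀ (a : α) (ha : a ∈ X) (hb : a ∈ Y), t ⟨a, ha⟩ = s ⟨a, hb⟩

/-- The semi-join `R ⋉ S` on the instance `I`: the tuples of `I.rel R` having a match
in `I.rel S` (a tuple agreeing with them on `attr R ∩ attr S`). -/
def semiJoin {D : Type u} (attr : ι → Finset α) (I : Inst attr D) (R S : ι) :
    Set (Tuple D (attr R)) :=
  {t ∈ I.rel R | ∃ s ∈ I.rel S, AgreeOn t s}

/-- The instance obtained from `I` by replacing the content of relation `R` with the
semi-join `R ⋉ S` (all other relations unchanged). -/
def Inst.semiJoinUpdate [DecidableEq ι] {attr : ι → Finset α} {D : Type u}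
    (I : Inst attr D) (R S : ι) : Inst attr D where
  rel := Function.update I.rel R (semiJoin attr I R S)
  finite := by
    intro R'
    rcases eq_or_ne R' R with rfl | h
    · rw [Function.update_self]
      exact (I.finite R').subset fun t ht => ht.1
    · rw [Function.update_of_ne h]
      exact I.finite R'

/-- The forward pass of the semi-join phase: process the vertices in the order given by
the list `L`; when processing a vertex `R`, successively replace its content by `R ⋉ S`
for each of its children `S` (listed by `childList R`). -/
def forwardPass [DecidableEq ι] {attr : ι → Finset α} {D : Type u}
    (I : Inst attr D) (L : List ι) (childList : ι → List ι) : Inst attr D :=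
  L.foldl (fun J R => (childList R).foldl (fun K S => K.semiJoinUpdate R S) J) I

/-- The backward pass of the semi-join phase: process the vertices in the order given by
the list `L`; when processing a non-root vertex `R`, replace its content by `R ⋉ par R`. -/
def backwardPass [DecidableEq ι] {attr : ι → Finset α} {D : Type u}
    (I : Inst attr D) (L : List ι) (r : ι) (par : ι → ι) : Inst attr D :=
  L.foldl (fun J R => if R = r then J else J.semiJoinUpdate R (par R)) I

end JoinQuery

namespace JoinQuery

universe v


open SimpleGraph


private lemma isAcyclic_of_embedding' {V W : Type} {G : SimpleGraph V} {H : SimpleGraph W}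
    (f : G ↪g H) (h : H.IsAcyclic) : G.IsAcyclic := fun _ c hc =>
  h (c.map f.toHom) (hc.map f.injective)

private lemma sup_edge_isAcyclic' {V : Type} {G : SimpleGraph V} (hG : G.IsAcyclic) {u v : V}
    (hne : u ≠ v) (hr : ¬ G.Reachable u v) : (G ⊔ edge u v).IsAcyclic := by
  have hadj : ¬ G.Adj u v := fun ha => hr ha.reachable
  have hbridge : (G ⊔ edge u v).IsBridge s(u, v) := by
    rw [isBridge_iff]
    refine fun hreach => hr (hreach.mono ?_)
    intro a b hab
    rcases hab with ⟨hab1, hab2⟩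
    rcases hab1 with h1 | h1
    · exact h1
    · exfalso
      rw [edge_adj] at h1
      apply hab2
      simp only [fromEdgeSet_adj, Set.mem_singleton_iff]
      rcases h1.1 with ⟨rfl, rfl⟩ | ⟨rfl, rfl⟩
      · exact ⟨rfl, h1.2⟩
      · exact ⟨Sym2.eq_swap, h1.2⟩
  intro a c hc
  by_cases he : s(u, v) ∈ c.edges
  · exact hbridge.notMem_edges_of_isCycle hc he
  · have hsub : ∀ e ∈ c.edges, e ∈ G.edgeSet := by
      intro e hec
      have h2 := c.edges_subset_edgeSet hec
      rw [edgeSet_sup, edge_edgeSet_of_ne hne] at h2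
      rcases h2 with h1 | h1
      · exact h1
      · exact absurd (h1 ▸ hec) he
    exact hG (c.transfer G hsub) (hc.transfer hsub)

private lemma ncard_edgeSet' {V : Type} (G : SimpleGraph V) [Fintype G.edgeSet] :
    G.edgeSet.ncard = G.edgeFinset.card := by
  rw [Set.ncard_eq_toFinset_card', Set.toFinset_card, ← edgeFinset_card]

private lemma forest_card_aux' {V : Type} [Fintype V] [Nonempty V] :
    ∀ (n : ℕ) (G : SimpleGraph V), G.IsAcyclic →
      Nat.card (Sym2 V) - G.edgeSet.ncard ≤ n →
      G.edgeSet.ncard + 1 ≤ Fintype.card V ∧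
        (G.edgeSet.ncard + 1 = Fintype.card V → G.Connected) := by
  have key : ∀ (G : SimpleGraph V), G.IsAcyclic → G.Connected →
      G.edgeSet.ncard + 1 = Fintype.card V := by
    intro G hG hcon
    classical
    have htree : G.IsTree := ⟨hcon, hG⟩
    have h1 := htree.card_edgeFinset
    rwa [ncard_edgeSet' G]
  have step : ∀ (G : SimpleGraph V), G.IsAcyclic → ¬ G.Connected →
      ∃ G' : SimpleGraph V, G'.IsAcyclic ∧ G'.edgeSet.ncard = G.edgeSet.ncard + 1 := by
    intro G hG hcon
    classical
    have hpre : ¬ G.Preconnected := fun h => hcon ⟨h⟩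
    rw [Preconnected] at hpre
    push_neg at hpre
    obtain ⟨u, v, hr⟩ := hpre
    have hne : u ≠ v := by rintro rfl; exact hr (Reachable.refl u)
    have hadj : ¬ G.Adj u v := fun h => hr h.reachable
    refine ⟨G ⊔ edge u v, sup_edge_isAcyclic' hG hne hr, ?_⟩
    have := card_edgeFinset_sup_edge (G := G) hadj hne
    rw [ncard_edgeSet' (G ⊔ edge u v), ncard_edgeSet' G]
    exact this
  intro n
  induction n with
  | zero =>
    intro G hG hm
    by_cases hcon : G.Connected
    · exact ⟨(key G hG hcon).le, fun _ => hcon⟩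
    · exfalso
      obtain ⟨G', hG', hcard⟩ := step G hG hcon
      have hle : G'.edgeSet.ncard ≤ Nat.card (Sym2 V) := by
        rw [← Set.ncard_univ]
        exact Set.ncard_le_ncard (Set.subset_univ _) Set.finite_univ
      omega
  | succ n ih =>
    intro G hG hm
    by_cases hcon : G.Connected
    · exact ⟨(key G hG hcon).le, fun _ => hcon⟩
    · obtain ⟨G', hG', hcard⟩ := step G hG hcon
      have hle : G'.edgeSet.ncard ≤ Nat.card (Sym2 V) := by
        rw [← Set.ncard_univ]
        exact Set.ncard_le_ncard (Set.subset_univ _) Set.finite_univ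
      have := ih G' hG' (by omega)
      refine ⟨by omega, fun h => absurd h (by omega)⟩

private lemma forest_card' {V : Type} [Fintype V] [Nonempty V] (G : SimpleGraph V)
    (hG : G.IsAcyclic) :
    G.edgeSet.ncard + 1 ≤ Fintype.card V ∧
      (G.edgeSet.ncard + 1 = Fintype.card V → G.Connected) :=
  forest_card_aux' _ G hG le_rfl


open SimpleGraph in
private lemma eCount_eq_induce' {ι α : Type} [DecidableEq α] (attr : ι → Finset α)
    (T : SimpleGraph ι) (A : α) :
    eCount attr T A = (T.induce {R : ι | A ∈ attr R}).edgeSet.ncard := by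
  classical
  rw [eCount, ← Set.ncard_image_of_injective _ (Sym2.map.injective Subtype.val_injective)]
  congr 1
  ext e
  simp only [Set.mem_sep_iff, Set.mem_image]
  constructor
  · rintro ⟨he, hall⟩
    induction e using Sym2.ind with
    | _ x y =>
      rw [mem_edgeSet] at he
      refine ⟨s(⟨x, hall x (by simp)⟩, ⟨y, hall y (by simp)⟩), ?_, by rw [Sym2.map_pair_eq]⟩
      rw [mem_edgeSet]
      simpa using he
  · rintro ⟨e', he', rfl⟩
    induction e' using Sym2.ind with
    | _ a b =>
      rw [mem_edgeSet] at he'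
      have hadj : T.Adj a.1 b.1 := by simpa using he'
      rw [Sym2.map_pair_eq]
      refine ⟨T.mem_edgeSet.mpr hadj, ?_⟩
      intro R hR
      rw [Sym2.mem_iff] at hR
      rcases hR with rfl | rfl
      · exact a.2
      · exact b.2

open SimpleGraph in
private lemma weight_eq_sum' {ι α : Type} [Fintype ι] [DecidableEq α] (attr : ι → Finset α)
    (T : SimpleGraph ι) :
    weight attr T = ∑ A ∈ attrsOf attr Finset.univ, eCount attr T A := by
  classical
  have hW : ∀ e ∈ T.edgeSet.toFinset, edgeWeight attr e =
      ∑ A ∈ attrsOf attr Finset.univ, if (∀ R ∈ e, A ∈ attr R) then 1 else 0 := by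
    intro e _
    induction e using Sym2.ind with
    | _ x y =>
      have h1 : edgeWeight attr s(x, y) = (attr x ∩ attr y).card := rfl
      have hset : attr x ∩ attr y =
          (attrsOf attr Finset.univ).filter (fun A => ∀ R ∈ s(x, y), A ∈ attr R) := by
        ext A
        simp only [Finset.mem_inter, Finset.mem_filter, attrsOf, Finset.mem_biUnion, Sym2.mem_iff]
        constructor
        · rintro ⟨hx, hy⟩
          exact ⟨⟨x, Finset.mem_univ x, hx⟩, by rintro R (rfl | rfl) <;> assumption⟩
        · rintro ⟨-, h⟩
          exact ⟨h x (Or.inl rfl), h y (Or.inr rfl)⟩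
      rw [h1, hset, Finset.card_filter]
  rw [weight, ← Set.coe_toFinset T.edgeSet, finsum_mem_coe_finset, Finset.sum_congr rfl hW,
    Finset.sum_comm]
  refine Finset.sum_congr rfl fun A _ => ?_
  rw [eCount, ← Finset.card_filter]
  have hs : {e ∈ T.edgeSet | ∀ R ∈ e, A ∈ attr R} =
      ↑(T.edgeSet.toFinset.filter (fun e => ∀ R ∈ e, A ∈ attr R)) := by
    ext e; simp [Set.mem_sep_iff]
  rw [hs, Set.ncard_coe_finset]

open SimpleGraph in
private lemma nCount_eq_card' {ι α : Type} [Fintype ι] (attr : ι → Finset α) (A : α)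
    [Fintype {R : ι | A ∈ attr R}] :
    nCount attr A = Fintype.card {R : ι | A ∈ attr R} := by
  rw [nCount, ← Nat.card_coe_set_eq, Nat.card_eq_fintype_card]

open SimpleGraph in
private lemma induce_acyclic' {ι : Type} {T : SimpleGraph ι} (hT : T.IsAcyclic) (s : Set ι) :
    (T.induce s).IsAcyclic :=
  isAcyclic_of_embedding' (SimpleGraph.Embedding.induce s) hT

/- STATEMENT 1 -/
theorem maxSpanningTree_isJoinTree {ι α : Type} [Fintype ι] [DecidableEq α]
    (attr : ι → Finset α) (hattr : ∀ R : ι, (attr R).Nonempty)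
    (hconn : (joinGraph attr).Connected)
    (hacyclic : Acyclic attr)
    (T : SimpleGraph ι) (hT : IsMaxSpanningTree attr T) :
    IsJoinTree attr T := by
  classical
  obtain ⟨T₀, hT₀⟩ := hacyclic
  set W := attrsOf attr Finset.univ with hWdef
  have hexists : ∀ A ∈ W, ∃ R, A ∈ attr R := by
    intro A hA
    obtain ⟨R, -, hR⟩ := Finset.mem_biUnion.mp hA
    exact ⟨R, hR⟩
  have hmemW : ∀ {A : α}, (∃ R, A ∈ attr R) → A ∈ W := by
    rintro A ⟨R, hR⟩
    exact Finset.mem_biUnion.mpr ⟨R, Finset.mem_univ R, hR⟩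
  have key0 : ∀ A ∈ W, eCount attr T₀ A + 1 = nCount attr A := by
    intro A hA
    haveI : Fintype {R : ι | A ∈ attr R} := (Set.toFinite _).fintype
    haveI : Nonempty {R : ι | A ∈ attr R} := by
      obtain ⟨R, hR⟩ := hexists A hA
      exact ⟨⟨R, hR⟩⟩
    have htree : (T₀.induce {R : ι | A ∈ attr R}).IsTree :=
      ⟨hT₀.2 A (hexists A hA), induce_acyclic' hT₀.1.2.IsAcyclic _⟩
    have h1 := htree.card_edgeFinset
    rw [eCount_eq_induce', ncard_edgeSet', nCount_eq_card' attr A]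
    exact h1
  have key1 : ∀ A ∈ W, eCount attr T A + 1 ≤ nCount attr A ∧
      (eCount attr T A + 1 = nCount attr A →
        (T.induce {R : ι | A ∈ attr R}).Connected) := by
    intro A hA
    haveI : Fintype {R : ι | A ∈ attr R} := (Set.toFinite _).fintype
    haveI : Nonempty {R : ι | A ∈ attr R} := by
      obtain ⟨R, hR⟩ := hexists A hA
      exact ⟨⟨R, hR⟩⟩
    have hfc := forest_card' (T.induce {R : ι | A ∈ attr R})
      (induce_acyclic' hT.1.2.IsAcyclic _)
    rw [eCount_eq_induce', nCount_eq_card' attr A]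
    exact hfc
  have hw : ∑ A ∈ W, eCount attr T₀ A ≤ ∑ A ∈ W, eCount attr T A := by
    have h := hT.2 T₀ hT₀.1
    rwa [weight_eq_sum', weight_eq_sum'] at h
  have hle : ∀ A ∈ W, eCount attr T A ≤ eCount attr T₀ A := by
    intro A hA
    have h1 := (key1 A hA).1
    have h2 := key0 A hA
    omega
  have hsum_eq : ∑ A ∈ W, eCount attr T A = ∑ A ∈ W, eCount attr T₀ A :=
    le_antisymm (Finset.sum_le_sum hle) hw
  have heq := (Finset.sum_eq_sum_iff_of_le hle).mp hsum_eq
  refine ⟨hT.1, ?_⟩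
  intro A hA
  have hAW := hmemW hA
  refine (key1 A hAW).2 ?_
  have h1 := heq A hAW
  have h2 := key0 A hAW
  omega


end JoinQuery
end

section
/- Let q be a natural join query with connected join graph G_q, edges weighted by w(R,S) = |attr(R) ∩ attr(S)|. For a spanning tree T of G_q and an attribute A, let e_A(T) be the number of edges {R,S} of T with A ∈ attr(R) ∩ attr(S), and let n_A be the number of relations of q whose attribute set contains A. Then the total weight of T equals the sum over all attributes A of e_A(T), this sum is at most the sum over all attributes A of (n_A − 1), and equality holds if and only if T is a join tree of q. -/
namespace JoinQuery

universe v

open SimpleGraph Finset in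
private lemma tree_edge_bound' {ι : Type} [Fintype ι] (T : SimpleGraph ι) (hT : T.IsTree)
    (P : ι → Prop) [DecidablePred P]
    [Fintype T.edgeSet] [DecidablePred fun e : Sym2 ι => ∀ x ∈ e, P x]
    (hne : (Finset.univ.filter P).Nonempty) :
    (T.edgeFinset.filter (fun e => ∀ x ∈ e, P x)).card + 1 ≤ (Finset.univ.filter P).card := by
  classical
  obtain ⟨r, -⟩ := id hne
  choose f hf hf' using fun v => (hT.existsUnique_path v r)
  have dich : ∀ {u v : ι} (h : T.Adj u v),
      f u = Walk.cons h (f v) ∨ f v = Walk.cons h.symm (f u) := by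
    intro u v h
    by_cases hu : u ∈ (f v).support
    · right
      have ht : (f v).takeUntil u hu = Walk.cons h.symm Walk.nil := by
        have h1 : ((f v).takeUntil u hu).IsPath := (hf v).takeUntil hu
        have h2 : (Walk.cons h.symm Walk.nil : T.Walk v u).IsPath := by
          simp [Walk.cons_isPath_iff, h.ne']
        exact (hT.existsUnique_path v u).unique h1 h2
      have hs := (f v).take_spec hu
      rw [ht] at hs
      have hd : (f v).dropUntil u hu = f u := hf' u _ ((hf v).dropUntil hu)
      rw [hd] at hs
      simpa using hs.symm
    · left
      exact (hf' u _ ((Walk.cons_isPath_iff h (f v)).2 ⟨hf v, hu⟩)).symm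
  have hchild : ∀ e ∈ T.edgeFinset, ∃ (x y : ι) (h : T.Adj x y),
      e = s(x, y) ∧ f x = Walk.cons h (f y) := by
    intro e he
    induction e using Sym2.ind with
    | _ a b =>
      have hadj : T.Adj a b := by simpa using he
      rcases dich hadj with h1 | h2
      · exact ⟨a, b, hadj, rfl, h1⟩
      · exact ⟨b, a, hadj.symm, Sym2.eq_swap, h2⟩
  choose ch pa hadj hske hfch using hchild
  have hne' : (Finset.univ.filter P).Nonempty := hne
  obtain ⟨m, hm, hmin⟩ := Finset.exists_min_image (Finset.univ.filter P)
    (fun v => (f v).length) hne'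
  have hcardle : (T.edgeFinset.filter (fun e => ∀ x ∈ e, P x)).card
      ≤ ((Finset.univ.filter P).erase m).card := by
    apply Finset.card_le_card_of_injOn (fun e => if he : e ∈ T.edgeFinset then ch e he else m)
    · intro e he'
      have he : e ∈ T.edgeFinset := (Finset.mem_filter.1 he').1
      have hP : ∀ x ∈ e, P x := (Finset.mem_filter.1 he').2
      simp only [dif_pos he]
      have hchm : ch e he ∈ e := by
        have h0 : ch e he ∈ s(ch e he, pa e he) := Sym2.mem_mk_left _ _
        rwa [← hske e he] at h0
      have hpam : pa e he ∈ e := by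
        have h0 : pa e he ∈ s(ch e he, pa e he) := Sym2.mem_mk_right _ _
        rwa [← hske e he] at h0
      refine Finset.mem_erase.2 ⟨?_, Finset.mem_filter.2 ⟨Finset.mem_univ _, hP _ hchm⟩⟩
      have hlen : (f (ch e he)).length = (f (pa e he)).length + 1 := by
        rw [hfch e he, Walk.length_cons]
      have hpaP : pa e he ∈ Finset.univ.filter P :=
        Finset.mem_filter.2 ⟨Finset.mem_univ _, hP _ hpam⟩
      intro hEq
      have h2 := hmin _ hpaP
      rw [hEq] at hlen
      omega
    · intro e₁ h₁' e₂ h₂' hEq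
      have h₁ : e₁ ∈ T.edgeFinset := (Finset.mem_filter.1 (Finset.mem_coe.1 h₁')).1
      have h₂ : e₂ ∈ T.edgeFinset := (Finset.mem_filter.1 (Finset.mem_coe.1 h₂')).1
      simp only [dif_pos h₁, dif_pos h₂] at hEq
      have g1 : (f (ch e₁ h₁)).getVert 1 = pa e₁ h₁ := by
        rw [hfch e₁ h₁]
        simp [Walk.getVert_cons_succ, Walk.getVert_zero]
      have g2 : (f (ch e₂ h₂)).getVert 1 = pa e₂ h₂ := by
        rw [hfch e₂ h₂]
        simp [Walk.getVert_cons_succ, Walk.getVert_zero]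
      have hpa : pa e₁ h₁ = pa e₂ h₂ := by
        rw [← g1, ← g2, hEq]
      rw [hske e₁ h₁, hske e₂ h₂, hEq, hpa]
  have hcard := Finset.card_erase_of_mem hm
  have hpos : 0 < (Finset.univ.filter P).card := Finset.card_pos.2 hne
  omega

open SimpleGraph Finset in
private lemma tree_edge_eq_iff' {ι : Type} [Fintype ι] (T : SimpleGraph ι) (hT : T.IsTree)
    (P : ι → Prop) [DecidablePred P]
    [Fintype T.edgeSet] [DecidablePred fun e : Sym2 ι => ∀ x ∈ e, P x]
    (hne : (Finset.univ.filter P).Nonempty) :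
    (T.edgeFinset.filter (fun e => ∀ x ∈ e, P x)).card + 1 = (Finset.univ.filter P).card ↔
      (T.induce {x | P x}).Connected := by
  classical
  constructor
  · intro hEq
    by_contra hnc
    obtain ⟨a₀, ha₀⟩ := id hne
    have hP₀ : P a₀ := (Finset.mem_filter.1 ha₀).2
    have hnonempty : Nonempty ({x | P x} : Set ι) := ⟨⟨a₀, hP₀⟩⟩
    rw [SimpleGraph.connected_iff] at hnc
    push_neg at hnc
    have hnp : ¬ (T.induce {x | P x}).Preconnected := fun h => (not_isEmpty_iff.2 hnonempty) (hnc h)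
    rw [SimpleGraph.Preconnected] at hnp
    push_neg at hnp
    obtain ⟨a, b, hab⟩ := hnp
    set P₁ : ι → Prop := fun x => ∃ h : P x, (T.induce {x | P x}).Reachable a ⟨x, h⟩ with hP₁
    set P₂ : ι → Prop := fun x => P x ∧ ¬ P₁ x with hP₂
    have h1P : ∀ x, P₁ x → P x := fun x hx => hx.1
    have h2P : ∀ x, P₂ x → P x := fun x hx => hx.1
    have hne₁ : (Finset.univ.filter P₁).Nonempty :=
      ⟨a.1, Finset.mem_filter.2 ⟨Finset.mem_univ _, ⟨a.2, by exact Reachable.refl _⟩⟩⟩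
    have hne₂ : (Finset.univ.filter P₂).Nonempty := by
      refine ⟨b.1, Finset.mem_filter.2 ⟨Finset.mem_univ _, b.2, ?_⟩⟩
      rintro ⟨h, hr⟩
      exact hab (by convert hr)
    -- edge sets split
    have hsplit : T.edgeFinset.filter (fun e => ∀ x ∈ e, P x) =
        T.edgeFinset.filter (fun e => ∀ x ∈ e, P₁ x) ∪
        T.edgeFinset.filter (fun e => ∀ x ∈ e, P₂ x) := by
      apply Finset.Subset.antisymm
      · intro e he
        have heE : e ∈ T.edgeFinset := (Finset.mem_filter.1 he).1
        have hPe : ∀ x ∈ e, P x := (Finset.mem_filter.1 he).2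
        induction e using Sym2.ind with
        | _ x y =>
          have hadj : T.Adj x y := by simpa using heE
          have hx : P x := hPe x (Sym2.mem_mk_left _ _)
          have hy : P y := hPe y (Sym2.mem_mk_right _ _)
          have hindadj : (T.induce {x | P x}).Adj ⟨x, hx⟩ ⟨y, hy⟩ := by
            simp [hadj]
          have hstep : P₁ x ↔ P₁ y := by
            constructor
            · rintro ⟨h, hr⟩
              exact ⟨hy, (hr.trans hindadj.reachable : _)⟩
            · rintro ⟨h, hr⟩
              exact ⟨hx, (hr.trans hindadj.symm.reachable : _)⟩
          by_cases h1 : P₁ x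
          · refine Finset.mem_union_left _ (Finset.mem_filter.2 ⟨heE, ?_⟩)
            intro z hz
            rcases Sym2.mem_iff.1 hz with rfl | rfl
            · exact h1
            · exact hstep.1 h1
          · refine Finset.mem_union_right _ (Finset.mem_filter.2 ⟨heE, ?_⟩)
            intro z hz
            rcases Sym2.mem_iff.1 hz with rfl | rfl
            · exact ⟨hx, h1⟩
            · exact ⟨hy, fun h2 => h1 (hstep.2 h2)⟩
      · intro e he
        rcases Finset.mem_union.1 he with h | h
        · exact Finset.mem_filter.2 ⟨(Finset.mem_filter.1 h).1,
            fun z hz => h1P z ((Finset.mem_filter.1 h).2 z hz)⟩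
        · exact Finset.mem_filter.2 ⟨(Finset.mem_filter.1 h).1,
            fun z hz => h2P z ((Finset.mem_filter.1 h).2 z hz)⟩
    have hdisjE : Disjoint (T.edgeFinset.filter (fun e => ∀ x ∈ e, P₁ x))
        (T.edgeFinset.filter (fun e => ∀ x ∈ e, P₂ x)) := by
      rw [Finset.disjoint_left]
      intro e h1 h2
      induction e using Sym2.ind with
      | _ x y =>
        have hx1 : P₁ x := (Finset.mem_filter.1 h1).2 x (Sym2.mem_mk_left _ _)
        have hx2 : P₂ x := (Finset.mem_filter.1 h2).2 x (Sym2.mem_mk_left _ _)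
        exact hx2.2 hx1
    have hdisjV : Disjoint (Finset.univ.filter P₁) (Finset.univ.filter P₂) := by
      rw [Finset.disjoint_left]
      intro x h1 h2
      exact ((Finset.mem_filter.1 h2).2).2 ((Finset.mem_filter.1 h1).2)
    have hVsplit : Finset.univ.filter P = Finset.univ.filter P₁ ∪ Finset.univ.filter P₂ := by
      ext x
      simp only [Finset.mem_filter, Finset.mem_union, Finset.mem_univ, true_and]
      constructor
      · intro hx
        by_cases h1 : P₁ x
        · exact Or.inl h1
        · exact Or.inr ⟨hx, h1⟩
      · rintro (h | h)
        · exact h1P x h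
        · exact h2P x h
    have hb₁ := tree_edge_bound' T hT P₁ hne₁
    have hb₂ := tree_edge_bound' T hT P₂ hne₂
    have hE : (T.edgeFinset.filter (fun e => ∀ x ∈ e, P x)).card =
        (T.edgeFinset.filter (fun e => ∀ x ∈ e, P₁ x)).card +
        (T.edgeFinset.filter (fun e => ∀ x ∈ e, P₂ x)).card := by
      rw [hsplit, Finset.card_union_of_disjoint hdisjE]
    have hV : (Finset.univ.filter P).card =
        (Finset.univ.filter P₁).card + (Finset.univ.filter P₂).card := by
      rw [hVsplit, Finset.card_union_of_disjoint hdisjV]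
    omega
  · intro hconn
    have hacyc : (T.induce {x | P x}).IsAcyclic := by
      intro v c hc
      exact hT.2 _ (hc.map (f := (SimpleGraph.Embedding.induce {x | P x}).toHom)
        Subtype.val_injective)
    have hTree' : (T.induce {x | P x}).IsTree := ⟨hconn, hacyc⟩
    have h1 := hTree'.card_edgeFinset
    have h2 : Fintype.card ({x | P x} : Set ι) = (Finset.univ.filter P).card := by
      rw [← Set.toFinset_card, Set.toFinset_setOf]
    have h3 : (T.induce {x | P x}).edgeFinset.card =
        (T.edgeFinset.filter (fun e => ∀ x ∈ e, P x)).card := by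
      apply Finset.card_bij (fun e _ => Sym2.map Subtype.val e)
      · intro e he
        induction e using Sym2.ind with
        | _ x y =>
          have hadj : (T.induce {x | P x}).Adj x y := by simpa using he
          have hadj' : T.Adj x.1 y.1 := by simpa using hadj
          simp only [Sym2.map_pair_eq]
          refine Finset.mem_filter.2 ⟨by simpa using hadj', ?_⟩
          intro z hz
          rcases Sym2.mem_iff.1 hz with rfl | rfl
          · exact x.2
          · exact y.2
      · intro e₁ h₁ e₂ h₂ h
        exact Sym2.map.injective Subtype.val_injective h
      · intro e he
        induction e using Sym2.ind with
        | _ x y =>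
          have h1' := Finset.mem_filter.1 he
          have hadj : T.Adj x y := by simpa using h1'.1
          have hx : P x := h1'.2 x (Sym2.mem_mk_left _ _)
          have hy : P y := h1'.2 y (Sym2.mem_mk_right _ _)
          refine ⟨s(⟨x, hx⟩, ⟨y, hy⟩), ?_, by simp⟩
          simp [hadj]
    omega

/- STATEMENT 2 -/
theorem weight_eq_sum_eCount_and_le {ι α : Type} [Fintype ι] [DecidableEq α]
    (attr : ι → Finset α) (hattr : ∀ R : ι, (attr R).Nonempty)
    (hconn : (joinGraph attr).Connected)
    (T : SimpleGraph ι) (hT : IsSpanningTree (joinGraph attr) T) :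
    weight attr T = ∑ A ∈ attrsOf attr Finset.univ, eCount attr T A ∧
    ∑ A ∈ attrsOf attr Finset.univ, eCount attr T A ≤
      ∑ A ∈ attrsOf attr Finset.univ, (nCount attr A - 1) ∧
    ((∑ A ∈ attrsOf attr Finset.univ, eCount attr T A =
        ∑ A ∈ attrsOf attr Finset.univ, (nCount attr A - 1)) ↔ IsJoinTree attr T) := by
  classical
  set U := attrsOf attr Finset.univ with hU
  have hUsub : ∀ R : ι, attr R ⊆ U := fun R => attr_subset_attrsOf attr (Finset.mem_univ R)
  have heq : ∀ A : α, eCount attr T A =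
      (T.edgeFinset.filter (fun e => ∀ R ∈ e, A ∈ attr R)).card := by
    intro A
    rw [eCount, show {e ∈ T.edgeSet | ∀ R ∈ e, A ∈ attr R} =
        ↑(T.edgeFinset.filter (fun e => ∀ R ∈ e, A ∈ attr R)) from by
      ext e
      simp [Set.mem_setOf_eq, SimpleGraph.mem_edgeFinset]]
    exact Set.ncard_coe_finset _
  have hnq : ∀ A : α, nCount attr A = (Finset.univ.filter (fun R => A ∈ attr R)).card := by
    intro A
    rw [nCount, show {R : ι | A ∈ attr R} =
        ↑(Finset.univ.filter (fun R => A ∈ attr R)) from by ext R; simp]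
    exact Set.ncard_coe_finset _
  have hVne : ∀ A ∈ U, (Finset.univ.filter (fun R => A ∈ attr R)).Nonempty := by
    intro A hA
    obtain ⟨R, -, hR⟩ := Finset.mem_biUnion.1 hA
    exact ⟨R, Finset.mem_filter.2 ⟨Finset.mem_univ _, hR⟩⟩
  have hbound : ∀ A ∈ U, eCount attr T A + 1 ≤ nCount attr A := by
    intro A hA
    rw [heq A, hnq A]
    exact tree_edge_bound' T hT.2 (fun R => A ∈ attr R) (hVne A hA)
  have hiff : ∀ A ∈ U, (eCount attr T A = nCount attr A - 1 ↔
      (T.induce {R : ι | A ∈ attr R}).Connected) := by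
    intro A hA
    have hpos : 0 < nCount attr A := by
      rw [hnq A]; exact Finset.card_pos.2 (hVne A hA)
    have h2 : (T.edgeFinset.filter (fun e => ∀ R ∈ e, A ∈ attr R)).card + 1 =
        (Finset.univ.filter (fun R => A ∈ attr R)).card ↔
          (T.induce {R : ι | A ∈ attr R}).Connected :=
      tree_edge_eq_iff' T hT.2 (fun R => A ∈ attr R) (hVne A hA)
    rw [heq A, hnq A]
    rw [hnq A] at hpos
    constructor
    · intro h
      exact h2.1 (by omega)
    · intro h
      have := h2.2 h
      omega
  -- Part 1
  have part1 : weight attr T = ∑ A ∈ U, eCount attr T A := by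
    rw [weight, ← SimpleGraph.coe_edgeFinset, finsum_mem_coe_finset]
    have hper : ∀ e ∈ T.edgeFinset,
        edgeWeight attr e = ∑ A ∈ U, if (∀ R ∈ e, A ∈ attr R) then 1 else 0 := by
      intro e he
      induction e using Sym2.ind with
      | _ a b =>
        have hsub : attr a ∩ attr b ⊆ U := Finset.inter_subset_left.trans (hUsub a)
        have hpred : ∀ A : α, (∀ R ∈ (s(a, b) : Sym2 ι), A ∈ attr R) ↔ A ∈ attr a ∩ attr b := by
          intro A
          simp [Sym2.mem_iff, Finset.mem_inter, forall_eq_or_imp]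
        rw [show edgeWeight attr s(a, b) = (attr a ∩ attr b).card from rfl]
        simp only [hpred]
        rw [Finset.sum_ite_mem, Finset.inter_eq_right.2 hsub, Finset.sum_const,
          smul_eq_mul, mul_one]
    rw [Finset.sum_congr rfl hper, Finset.sum_comm]
    refine Finset.sum_congr rfl fun A _ => ?_
    rw [heq A, Finset.card_eq_sum_ones, Finset.sum_filter]
  refine ⟨part1, ?_, ?_⟩
  · exact Finset.sum_le_sum fun A hA => by have := hbound A hA; omega
  · constructor
    · intro hsum
      have hle : ∀ A ∈ U, eCount attr T A ≤ nCount attr A - 1 :=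
        fun A hA => by have := hbound A hA; omega
      have hall := (Finset.sum_eq_sum_iff_of_le hle).1 hsum
      refine ⟨hT, fun A hex => ?_⟩
      obtain ⟨R, hR⟩ := hex
      have hA : A ∈ U := Finset.mem_biUnion.2 ⟨R, Finset.mem_univ R, hR⟩
      exact (hiff A hA).1 (hall A hA)
    · intro hJT
      refine Finset.sum_congr rfl fun A hA => ?_
      obtain ⟨R, -, hR⟩ := Finset.mem_biUnion.1 hA
      exact (hiff A hA).2 (hJT.2 A ⟨R, hR⟩)

end JoinQuery
end

section
/- Let q be an acyclic natural join query and q' a subjoin of q. If there exists a join tree T of q such that the relations of q' induce a connected subgraph of T, then q' is safe. -/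
namespace JoinQuery

universe v


/- Auxiliary lemmas -/

section Aux

variable {ι : Type} {α : Type}

/-- From connectivity of an induced subgraph, extract a walk in the ambient graph whose
support stays in the set. -/
lemma walk_in_set {T : SimpleGraph ι} {W : Set ι} (h : (T.induce W).Connected)
    {x y : ι} (hx : x ∈ W) (hy : y ∈ W) :
    ∃ w : T.Walk x y, ∀ v ∈ w.support, v ∈ W := by
  obtain ⟨w⟩ := h.preconnected ⟨x, hx⟩ ⟨y, hy⟩
  refine ⟨w.map (SimpleGraph.Embedding.induce W).toHom, ?_⟩
  intro v hv
  have hv' : v ∈ (w.map (SimpleGraph.Embedding.induce W).toHom).support := hv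
  rw [SimpleGraph.Walk.support_map, List.mem_map] at hv'
  obtain ⟨u, _, rfl⟩ := hv'
  exact u.2

/-- A walk from outside a finset into it crosses the boundary. -/
lemma exists_boundary [DecidableEq ι] {T : SimpleGraph ι} {P : Finset ι} :
    ∀ {x y : ι}, T.Walk x y → x ∉ P → y ∈ P →
      ∃ R p : ι, R ∉ P ∧ p ∈ P ∧ T.Adj R p
  | _, _, SimpleGraph.Walk.nil, hx, hy => absurd hy hx
  | x, y, @SimpleGraph.Walk.cons _ _ _ v _ h w, hx, hy =>
      if hv : v ∈ P then ⟨x, v, hx, hv, h⟩ else exists_boundary w hv hy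

/-- In an acyclic graph, if `R` is adjacent to `p`, and there is a walk from `p` to `R'`
avoiding `R`, then any walk from `R` to `R'` whose support lies in a set `Q` forces
`p ∈ Q` (since the unique path from `R` to `R'` starts with the edge `R—p`). -/
lemma mem_of_paths [DecidableEq ι] {T : SimpleGraph ι} (hT : T.IsAcyclic) {R p R' : ι} (hadj : T.Adj R p)
    (w2 : T.Walk p R') (hR : R ∉ w2.support)
    {Q : Set ι} (wA : T.Walk R R') (hQ : ∀ v ∈ wA.support, v ∈ Q) : p ∈ Q := by
  have hR2 : R ∉ w2.toPath.1.support :=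
    fun h => hR (SimpleGraph.Walk.support_toPath_subset w2 h)
  have hq : (SimpleGraph.Walk.cons hadj w2.toPath.1).IsPath :=
    SimpleGraph.Walk.IsPath.cons w2.toPath.2 hR2
  have heq := hT.path_unique ⟨SimpleGraph.Walk.cons hadj w2.toPath.1, hq⟩ wA.toPath
  have heq' : SimpleGraph.Walk.cons hadj w2.toPath.1 = wA.toPath.1 :=
    congrArg Subtype.val heq
  have hp : p ∈ (SimpleGraph.Walk.cons hadj w2.toPath.1).support := by
    rw [SimpleGraph.Walk.support_cons]
    exact List.mem_cons_of_mem _ (SimpleGraph.Walk.start_mem_support _)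
  rw [heq'] at hp
  exact hQ p (SimpleGraph.Walk.support_toPath_subset wA hp)

variable [Fintype ι] [DecidableEq α] [DecidableEq ι]

/-- Extend a tuple over the attributes of `P` to the attributes of `insert R P`, filling
in new attributes from a full tuple `u`. -/
def extendTuple (attr : ι → Finset α) {D : Type v} (P : Finset ι) (R : ι)
    (tP : Tuple D (attrsOf attr P)) (u : Tuple D (attrsOf attr Finset.univ)) :
    Tuple D (attrsOf attr (insert R P)) :=
  fun a => if h : a.1 ∈ attrsOf attr P then tP ⟨a.1, h⟩
    else u ⟨a.1, attrsOf_mono attr (Finset.subset_univ _) a.2⟩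

/-- The key extension step: add one relation `R`, attached to `p ∈ P`, to a partial
output tuple, using full reducedness at `p`. -/
lemma extend_step (attr : ι → Finset α) {D : Type v}
    (I : Inst attr D) {P : Finset ι} {R p : ι} (hp : p ∈ P)
    (hkey : ∀ a ∈ attr R, a ∈ attrsOf attr P → a ∈ attr p)
    {tP : Tuple D (attrsOf attr P)} (htP : tP ∈ output attr I P)
    {u : Tuple D (attrsOf attr Finset.univ)} (hu : u ∈ fullOutput attr I)
    (hup : restrict (attr_subset_attrsOf attr (Finset.mem_univ p)) u
      = restrict (attr_subset_attrsOf attr hp) tP) :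
    extendTuple attr P R tP u ∈ output attr I (insert R P) := by
  intro R'' hR''
  rcases Finset.mem_insert.mp hR'' with h | hR''P
  · subst h
    have key : restrict (attr_subset_attrsOf attr hR'') (extendTuple attr P R'' tP u)
        = restrict (attr_subset_attrsOf attr (Finset.mem_univ R'')) u := by
      funext a
      show (if h : (a : α) ∈ attrsOf attr P then tP ⟨a.1, h⟩ else _) = _
      by_cases hmem : (a : α) ∈ attrsOf attr P
      · rw [dif_pos hmem]
        have hap : (a : α) ∈ attr p := hkey a.1 a.2 hmem
        exact (congrFun hup ⟨a.1, hap⟩).symm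
      · rw [dif_neg hmem]; rfl
    rw [key]
    exact hu R'' (Finset.mem_univ R'')
  · have key : restrict (attr_subset_attrsOf attr hR'') (extendTuple attr P R tP u)
        = restrict (attr_subset_attrsOf attr hR''P) tP := by
      funext a
      show (if h : (a : α) ∈ attrsOf attr P then tP ⟨a.1, h⟩ else _) = _
      rw [dif_pos (attr_subset_attrsOf attr hR''P a.2)]; rfl
    rw [key]
    exact htP R'' hR''P

lemma extendTuple_agree (attr : ι → Finset α) {D : Type v} (P : Finset ι) (R : ι)
    (tP : Tuple D (attrsOf attr P)) (u : Tuple D (attrsOf attr Finset.univ))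
    (a : α) (h1 : a ∈ attrsOf attr P) (h2 : a ∈ attrsOf attr (insert R P)) :
    extendTuple attr P R tP u ⟨a, h2⟩ = tP ⟨a, h1⟩ :=
  dif_pos h1

end Aux

/- STATEMENT 3 -/
theorem safe_of_connected_in_some_joinTree {ι α : Type} [Fintype ι] [DecidableEq α]
    (attr : ι → Finset α) (hattr : ∀ R : ι, (attr R).Nonempty)
    (hconn : (joinGraph attr).Connected)
    (hacyclic : Acyclic attr)
    (S : Finset ι) (hS : S.Nonempty)
    (hex : ∃ T : SimpleGraph ι, IsJoinTree attr T ∧ (T.induce (S : Set ι)).Connected) :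
    Safe.{v} attr S := by
  classical
  intro D I hred
  obtain ⟨T, ⟨⟨hTle, hTtree⟩, hattrconn⟩, hSconn⟩ := hex
  apply Set.Subset.antisymm
  · -- hard direction: extend a tuple of the subjoin to a full output tuple
    intro t ht
    -- key induction: grow the set P of relations one relation at a time
    have key : ∀ (n : ℕ) (P : Finset ι), S ⊆ P →
        (∀ x ∈ P, ∃ s ∈ S, ∃ w : T.Walk x s, ∀ v ∈ w.support, v ∈ P) →
        ∀ tP : Tuple D (attrsOf attr P), tP ∈ output attr I P →
        (∀ (a : α) (h1 : a ∈ attrsOf attr P) (h2 : a ∈ attrsOf attr S),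
          tP ⟨a, h1⟩ = t ⟨a, h2⟩) →
        Fintype.card ι ≤ P.card + n →
        ∃ u ∈ fullOutput attr I,
          ∀ (a : α) (h1 : a ∈ attrsOf attr Finset.univ) (h2 : a ∈ attrsOf attr S),
            u ⟨a, h1⟩ = t ⟨a, h2⟩ := by
      intro n
      induction n with
      | zero =>
        intro P hSP hwalks tP htP hagree hcard
        have hP : P = Finset.univ :=
          Finset.eq_univ_of_card P (le_antisymm (Finset.card_le_univ P) (by omega))
        subst hP
        exact ⟨tP, htP, hagree⟩
      | succ n ih =>
        intro P hSP hwalks tP htP hagree hcard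
        by_cases hPu : P = Finset.univ
        · subst hPu
          exact ⟨tP, htP, hagree⟩
        · -- find a boundary edge R — p with R ∉ P, p ∈ P
          have : ¬ ∀ x, x ∈ P := fun h => hPu (Finset.eq_univ_iff_forall.mpr h)
          push_neg at this
          obtain ⟨q, hq⟩ := this
          obtain ⟨s0, hs0⟩ := hS
          obtain ⟨w0⟩ := hTtree.isConnected.preconnected q s0
          obtain ⟨R, p, hRP, hpP, hadj⟩ := exists_boundary w0 hq (hSP hs0)
          -- every shared attribute of R with P already occurs in p
          have hkey : ∀ a ∈ attr R, a ∈ attrsOf attr P → a ∈ attr p := by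
            intro a haR haP
            obtain ⟨R', hR'P, haR'⟩ := Finset.mem_biUnion.mp haP
            obtain ⟨s1, hs1, w1, hw1⟩ := hwalks p hpP
            obtain ⟨s2, hs2, w3, hw3⟩ := hwalks R' hR'P
            obtain ⟨wS, hwS⟩ := walk_in_set hSconn
              (by exact hs1 : s1 ∈ (S : Set ι)) (by exact hs2 : s2 ∈ (S : Set ι))
            have hA : (T.induce {v : ι | a ∈ attr v}).Connected := hattrconn a ⟨R, haR⟩
            obtain ⟨wA, hwA⟩ := walk_in_set hA
              (by exact haR : R ∈ {v : ι | a ∈ attr v})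
              (by exact haR' : R' ∈ {v : ι | a ∈ attr v})
            have hw2 : ∀ v ∈ (w1.append (wS.append w3.reverse)).support, v ∈ P := by
              intro v hv
              rcases (SimpleGraph.Walk.mem_support_append_iff _ _).mp hv with h | h
              · exact hw1 v h
              · rcases (SimpleGraph.Walk.mem_support_append_iff _ _).mp h with h' | h'
                · exact hSP (hwS v h')
                · rw [SimpleGraph.Walk.support_reverse, List.mem_reverse] at h'
                  exact hw3 v h'
            exact mem_of_paths hTtree.IsAcyclic hadj (w1.append (wS.append w3.reverse))
              (fun hmem => hRP (hw2 R hmem)) wA hwA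
          -- full reducedness at p gives a full tuple matching tP on attr p
          have hp_tuple : restrict (attr_subset_attrsOf attr hpP) tP ∈ I.rel p :=
            htP p hpP
          rw [hred p] at hp_tuple
          obtain ⟨u, hu, hup⟩ := hp_tuple
          -- extend tP to insert R P
          have htP' := extend_step attr I hpP hkey htP hu hup
          refine ih (insert R P) (hSP.trans (Finset.subset_insert R P)) ?_ _ htP' ?_ ?_
          · intro x hx
            rcases Finset.mem_insert.mp hx with h | hxP
            · subst h
              obtain ⟨s1, hs1, w1, hw1⟩ := hwalks p hpP
              refine ⟨s1, hs1, SimpleGraph.Walk.cons hadj w1, ?_⟩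
              intro v hv
              rw [SimpleGraph.Walk.support_cons] at hv
              rcases List.mem_cons.mp hv with h | h
              · subst h; exact Finset.mem_insert_self _ _
              · exact Finset.mem_insert_of_mem (hw1 v h)
            · obtain ⟨s1, hs1, w1, hw1⟩ := hwalks x hxP
              exact ⟨s1, hs1, w1, fun v hv => Finset.mem_insert_of_mem (hw1 v hv)⟩
          · intro a h1 h2
            have haP : a ∈ attrsOf attr P := attrsOf_mono attr hSP h2
            rw [extendTuple_agree attr P R tP u a haP h1]
            exact hagree a haP h2
          · rw [Finset.card_insert_of_notMem hRP]
            omega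
    have hagree0 : ∀ (a : α) (h1 : a ∈ attrsOf attr S) (h2 : a ∈ attrsOf attr S),
        t ⟨a, h1⟩ = t ⟨a, h2⟩ := fun a h1 h2 => rfl
    obtain ⟨u, hu, hagree⟩ := key (Fintype.card ι) S le_rfl
      (fun x hx => ⟨x, hx, SimpleGraph.Walk.nil, fun v hv => by
        rw [SimpleGraph.Walk.mem_support_nil_iff] at hv; subst hv; exact hx⟩) t ht hagree0
      (Nat.le_add_left _ _)
    refine ⟨u, hu, ?_⟩
    funext a
    exact hagree a.1 (attrsOf_mono attr (Finset.subset_univ S) a.2) a.2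
  · -- easy direction: projections of full output tuples satisfy all relations of S
    rintro _ ⟨u, hu, rfl⟩
    intro R hR
    exact hu R (Finset.mem_univ R)

end JoinQuery
end

section
/- Let q be a natural join query with connected join graph. If q is γ-acyclic, then every connected subjoin of q is safe. -/
namespace JoinQuery

universe v


section Aux

open SimpleGraph

variable {V : Type}



/-- Split a walk at the last vertex belonging to `s` (if the start is in `s`). -/
lemma exists_split_last {G : SimpleGraph V} (s : Set V) :
    ∀ {u v : V} (w : G.Walk u v), ∃ (x : V) (w₁ : G.Walk u x) (w₂ : G.Walk x v),
      w = w₁.append w₂ ∧ (x ∈ s ∨ (x = u ∧ ∀ z ∈ w.support, z ∉ s)) ∧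
      (∀ z ∈ w₂.support, z ∈ s → z = x) := by
  intro u v w
  induction w with
  | @nil a =>
    by_cases ha : a ∈ s
    · exact ⟨a, Walk.nil, Walk.nil, rfl, Or.inl ha, by intro z hz _; simpa using hz⟩
    · refine ⟨a, Walk.nil, Walk.nil, rfl, Or.inr ⟨rfl, ?_⟩, ?_⟩
      · intro z hz; simp at hz; subst hz; exact ha
      · intro z hz _; simpa using hz
  | @cons a b c h wt ih =>
    obtain ⟨x, w₁, w₂, heq, hx, hlast⟩ := ih
    rcases hx with hxs | ⟨rfl, havoid⟩
    · exact ⟨x, Walk.cons h w₁, w₂, by rw [Walk.cons_append, heq], Or.inl hxs, hlast⟩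
    · by_cases ha : a ∈ s
      · refine ⟨a, Walk.nil, Walk.cons h wt, by rw [Walk.nil_append], Or.inl ha, ?_⟩
        intro z hz hzs
        rw [Walk.support_cons] at hz
        rcases List.mem_cons.1 hz with rfl | hz
        · rfl
        · exact absurd hzs (havoid z hz)
      · refine ⟨a, Walk.nil, Walk.cons h wt, by rw [Walk.nil_append], Or.inr ⟨rfl, ?_⟩, ?_⟩
        · intro z hz
          rw [Walk.support_cons] at hz
          rcases List.mem_cons.1 hz with rfl | hz
          · exact ha
          · exact havoid z hz
        · intro z hz hzs
          rw [Walk.support_cons] at hz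
          rcases List.mem_cons.1 hz with rfl | hz
          · rfl
          · exact absurd hzs (havoid z hz)

/-- In a tree, for any three vertices there is a "median" vertex lying on
a path between each pair; we phrase it relative to a given walk `w'` from `z₀` to `zn`. -/
lemma exists_median [DecidableEq V] {T : SimpleGraph V} (hc : T.Connected) (ha : T.IsAcyclic)
    (r z₀ zn : V) (w' : T.Walk z₀ zn) :
    ∃ m, m ∈ w'.support ∧
      (∃ p : T.Walk r z₀, p.IsPath ∧ m ∈ p.support) ∧
      (∃ q : T.Walk r zn, q.IsPath ∧ m ∈ q.support) := by
  obtain ⟨p0⟩ := hc.preconnected r z₀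
  obtain ⟨q0⟩ := hc.preconnected r zn
  set p := p0.bypass with hpdef
  set q := q0.bypass with hqdef
  have hp : p.IsPath := Walk.bypass_isPath p0
  have hq : q.IsPath := Walk.bypass_isPath q0
  obtain ⟨x, q₁, q₂, heq, hx, hlast⟩ := exists_split_last (G := T) {z | z ∈ p.support} q
  have hxp : x ∈ p.support := by
    rcases hx with hxs | ⟨hxr, havoid⟩
    · exact hxs
    · subst hxr; exact absurd (p.start_mem_support) (havoid x q.start_mem_support)
  have hxq : x ∈ q.support := by
    rw [heq, Walk.mem_support_append_iff]
    exact Or.inr q₂.start_mem_support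
  have hq₂ : q₂.IsPath := by
    rw [heq] at hq; exact hq.of_append_right
  set p₂ := p.dropUntil x hxp with hp₂def
  have hp₂ : p₂.IsPath := hp.dropUntil hxp
  have hq₂supp : ∀ z ∈ q₂.support, z ∈ p.support → z = x := fun z hz hzs => hlast z hz hzs
  -- the path from z₀ to zn through x
  have hw₀ : (p₂.reverse.append q₂).IsPath := by
    rw [Walk.isPath_def, Walk.support_append]
    refine List.Nodup.append ?_ ?_ ?_
    · rw [Walk.support_reverse]; exact List.nodup_reverse.2 (Walk.isPath_def _ |>.1 hp₂)
    · have := Walk.isPath_def _ |>.1 hq₂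
      rw [q₂.support_eq_cons] at this
      exact this.of_cons
    · intro z hz₁ hz₂
      rw [Walk.support_reverse, List.mem_reverse] at hz₁
      have hzp : z ∈ p.support := Walk.support_dropUntil_subset p hxp hz₁
      have hzq₂ : z ∈ q₂.support := by
        rw [q₂.support_eq_cons]; exact List.mem_cons_of_mem _ hz₂
      have : z = x := hq₂supp z hzq₂ hzp
      subst this
      have hnd := Walk.isPath_def _ |>.1 hq₂
      rw [q₂.support_eq_cons] at hnd
      exact (List.nodup_cons.1 hnd).1 hz₂
  have hxw₀ : x ∈ (p₂.reverse.append q₂).support := by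
    rw [Walk.mem_support_append_iff]
    exact Or.inr q₂.start_mem_support
  have hkey : (p₂.reverse.append q₂) = w'.bypass := by
    have := ha.path_unique ⟨p₂.reverse.append q₂, hw₀⟩ ⟨w'.bypass, Walk.bypass_isPath w'⟩
    exact congrArg Subtype.val this
  refine ⟨x, ?_, ⟨p, hp, hxp⟩, ⟨q, hq, hxq⟩⟩
  have : x ∈ w'.bypass.support := hkey ▸ hxw₀
  exact Walk.support_bypass_subset w' this


end Aux

section Tree

open SimpleGraph

variable {ι α : Type} [DecidableEq ι] [DecidableEq α] {attr : ι → Finset α} {T : SimpleGraph ι}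

/-- On a join tree, every vertex of a path between two relations containing an
attribute `A` also contains `A`. -/
lemma attr_of_mem_path (hJT : IsJoinTree attr T) {A : α} {u v : ι}
    (hu : A ∈ attr u) (hv : A ∈ attr v) {p : T.Walk u v} (hp : p.IsPath) :
    ∀ x ∈ p.support, A ∈ attr x := by
  have hcon := hJT.2 A ⟨u, hu⟩
  obtain ⟨w0⟩ := hcon.preconnected ⟨u, hu⟩ ⟨v, hv⟩
  let emb : T.induce {R : ι | A ∈ attr R} ↪g T := SimpleGraph.Embedding.induce _
  let w1 : T.Walk u v := w0.map emb.toHom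
  have hsupp : ∀ x ∈ w1.support, A ∈ attr x := by
    intro x hx
    replace hx : x ∈ (w0.map emb.toHom).support := hx
    rw [Walk.support_map] at hx
    obtain ⟨y, _, rfl⟩ := List.mem_map.1 hx
    exact y.2
  have hpu : p = w1.bypass := by
    have := hJT.1.2.IsAcyclic.path_unique ⟨p, hp⟩ ⟨w1.bypass, Walk.bypass_isPath w1⟩
    exact congrArg Subtype.val this
  intro x hx
  exact hsupp x (Walk.support_bypass_subset w1 (hpu ▸ hx))

/-- Lift a walk of the join graph to a walk of the join tree, made of tree paths
connecting consecutive vertices. -/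
lemma exists_lift (hc : T.Connected) :
    ∀ {u v : ι} (w : (joinGraph attr).Walk u v), ∃ w' : T.Walk u v,
      ∀ x ∈ w'.support, x ∈ w.support ∨
        ∃ (z₁ z₂ : ι) (hadj : (joinGraph attr).Adj z₁ z₂)
          (w₁ : (joinGraph attr).Walk u z₁) (w₂ : (joinGraph attr).Walk z₂ v)
          (pc : T.Walk z₁ z₂),
          w = w₁.append (Walk.cons hadj w₂) ∧ pc.IsPath ∧ x ∈ pc.support := by
  intro u v w
  induction w with
  | @nil a => exact ⟨Walk.nil, by intro x hx; left; simpa using hx⟩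
  | @cons a b c h wt ih =>
    obtain ⟨w'', hw''⟩ := ih
    obtain ⟨r0⟩ := hc.preconnected a b
    refine ⟨(r0.bypass).append w'', ?_⟩
    intro x hx
    rcases Walk.mem_support_append_iff _ _ |>.1 hx with hx1 | hx2
    · exact Or.inr ⟨a, b, h, Walk.nil, wt, r0.bypass, by rw [Walk.nil_append],
        Walk.bypass_isPath r0, hx1⟩
    · rcases hw'' x hx2 with hxw | ⟨z₁, z₂, hadj, w₁, w₂, pc, heq, hpc, hxpc⟩
      · exact Or.inl (by rw [Walk.support_cons]; exact List.mem_cons_of_mem _ hxw)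
      · exact Or.inr ⟨z₁, z₂, hadj, Walk.cons h w₁, w₂, pc,
          by rw [heq, Walk.cons_append], hpc, hxpc⟩

/-- Key combinatorial lemma: on a walk of the join graph from `z₀` to `zn`, if a
relation `R₁` shares attributes `A` with `z₀` and `c` with `zn`, some vertex of the
walk contains all of `A ∪ {c}`. -/
lemma cover_walk (hJT : IsJoinTree attr T)
    (hγ3 : ¬ ∃ (R S T' : ι) (x y z : α),
        R ≠ S ∧ R ≠ T' ∧ S ≠ T' ∧ x ≠ y ∧ x ≠ z ∧ y ≠ z ∧
        x ∈ attr R ∧ y ∈ attr R ∧ y ∈ attr S ∧ z ∈ attr S ∧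
        x ∈ attr T' ∧ y ∈ attr T' ∧ z ∈ attr T') :
    ∀ (n : ℕ) {z₀ zn : ι} (w : (joinGraph attr).Walk z₀ zn), w.length ≤ n →
      ∀ (R₁ : ι) (A : Finset α) (c : α), (∀ a ∈ A, a ∈ attr R₁ ∧ a ∈ attr z₀) →
        c ∈ attr R₁ → c ∈ attr zn →
        ∃ t ∈ w.support, (∀ a ∈ A, a ∈ attr t) ∧ c ∈ attr t := by
  have hc : T.Connected := hJT.1.2.isConnected
  have hacyc : T.IsAcyclic := hJT.1.2.IsAcyclic
  intro n
  induction n with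
  | zero =>
    intro z₀ zn w hlen R₁ A c hA hcR hcZ
    obtain ⟨w', hw'⟩ := exists_lift (attr := attr) hc w
    obtain ⟨m, hmw', ⟨p, hp, hmp⟩, ⟨q, hq, hmq⟩⟩ := exists_median hc hacyc R₁ z₀ zn w'
    have hmA : ∀ a ∈ A, a ∈ attr m := fun a ha =>
      attr_of_mem_path hJT (hA a ha).1 (hA a ha).2 hp m hmp
    have hmc : c ∈ attr m := attr_of_mem_path hJT hcR hcZ hq m hmq
    rcases hw' m hmw' with hm | ⟨z₁, z₂, hadj, w₁, w₂, pc, heq, hpc, hmpc⟩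
    · exact ⟨m, hm, hmA, hmc⟩
    · exfalso
      have : w.length = w₁.length + (w₂.length + 1) := by
        rw [heq, Walk.length_append, Walk.length_cons]
      omega
  | succ n IH =>
    intro z₀ zn w hlen R₁ A c hA hcR hcZ
    obtain ⟨w', hw'⟩ := exists_lift (attr := attr) hc w
    obtain ⟨m, hmw', ⟨p, hp, hmp⟩, ⟨q, hq, hmq⟩⟩ := exists_median hc hacyc R₁ z₀ zn w'
    have hmA : ∀ a ∈ A, a ∈ attr m := fun a ha =>
      attr_of_mem_path hJT (hA a ha).1 (hA a ha).2 hp m hmp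
    have hmc : c ∈ attr m := attr_of_mem_path hJT hcR hcZ hq m hmq
    rcases hw' m hmw' with hm | ⟨z₁, z₂, hadj, w₁, w₂, pc, heq, hpc, hmpc⟩
    · exact ⟨m, hm, hmA, hmc⟩
    · have hlen' : w.length = w₁.length + (w₂.length + 1) := by
        rw [heq, Walk.length_append, Walk.length_cons]
      obtain ⟨y, hy⟩ := hadj.2
      have hy₁ : y ∈ attr z₁ := (Finset.mem_inter.1 hy).1
      have hy₂ : y ∈ attr z₂ := (Finset.mem_inter.1 hy).2
      have hmy : y ∈ attr m := attr_of_mem_path hJT hy₁ hy₂ hpc m hmpc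
      obtain ⟨t₁, ht₁w, ht₁A, ht₁y⟩ := IH w₁ (by omega) m A y
        (fun a ha => ⟨hmA a ha, (hA a ha).2⟩) hmy hy₁
      obtain ⟨t₂, ht₂w, ht₂y', ht₂c⟩ := IH w₂ (by omega) m {y} c
        (fun a ha => by rw [Finset.mem_singleton] at ha; subst ha; exact ⟨hmy, hy₂⟩) hmc hcZ
      have ht₂y : y ∈ attr t₂ := ht₂y' y (Finset.mem_singleton_self y)
      have ht₁mem : t₁ ∈ w.support := by
        rw [heq, Walk.mem_support_append_iff]; exact Or.inl ht₁w
      have ht₂mem : t₂ ∈ w.support := by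
        rw [heq, Walk.mem_support_append_iff]
        exact Or.inr (by rw [Walk.support_cons]; exact List.mem_cons_of_mem _ ht₂w)
      by_cases hct₁ : c ∈ attr t₁
      · exact ⟨t₁, ht₁mem, ht₁A, hct₁⟩
      by_cases hAt₂ : ∀ a ∈ A, a ∈ attr t₂
      · exact ⟨t₂, ht₂mem, hAt₂, ht₂c⟩
      push_neg at hAt₂
      obtain ⟨astar, hastarA, hastart₂⟩ := hAt₂
      exact absurd ⟨t₁, t₂, m, astar, y, c,
        fun hEq => hct₁ (hEq ▸ ht₂c),
        fun hEq => hct₁ (hEq ▸ hmc),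
        fun hEq => hastart₂ (hEq ▸ hmA astar hastarA),
        fun hEq => hastart₂ (hEq ▸ ht₂y),
        fun hEq => hastart₂ (hEq ▸ ht₂c),
        fun hEq => hct₁ (hEq ▸ ht₁y),
        ht₁A astar hastarA, ht₁y, ht₂y, ht₂c, hmA astar hastarA, hmy, hmc⟩ hγ3

end Tree

section Cover

open SimpleGraph

variable {ι α : Type} [DecidableEq ι] [DecidableEq α] {attr : ι → Finset α}

/-- Key lemma: for any connected set `S` of relations and any relation `R'`, some
relation of `S` contains all attributes shared by `R'` and `S`. -/
lemma exists_cover (hγ : GammaAcyclic attr) (S : Finset ι) (hne : S.Nonempty)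
    (hwalk : ∀ P ∈ S, ∀ Q ∈ S, ∃ w : (joinGraph attr).Walk P Q, ∀ x ∈ w.support, x ∈ S)
    (R' : ι) : ∃ S₀ ∈ S, ∀ a ∈ attr R', a ∈ attrsOf attr S → a ∈ attr S₀ := by
  obtain ⟨T, hJT⟩ := hγ.1
  have claim : ∀ B : Finset α, (∀ b ∈ B, b ∈ attr R' ∧ b ∈ attrsOf attr S) →
      ∃ S₀ ∈ S, ∀ b ∈ B, b ∈ attr S₀ := by
    intro B
    induction B using Finset.induction_on with
    | empty => exact fun _ => ⟨hne.choose, hne.choose_spec, fun b hb => absurd hb (by simp)⟩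
    | @insert c B hcB IH =>
      intro hins
      obtain ⟨S₀, hS₀S, hS₀B⟩ := IH (fun b hb => hins b (Finset.mem_insert_of_mem hb))
      obtain ⟨hcR', hcS⟩ := hins c (Finset.mem_insert_self c B)
      obtain ⟨P, hPS, hcP⟩ := Finset.mem_biUnion.1 hcS
      obtain ⟨w, hws⟩ := hwalk S₀ hS₀S P hPS
      obtain ⟨t, htw, htB, htc⟩ := cover_walk hJT hγ.2 w.length w le_rfl R' B c
        (fun b hb => ⟨(hins b (Finset.mem_insert_of_mem hb)).1, hS₀B b hb⟩) hcR' hcP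
      refine ⟨t, hws t htw, fun b hb => ?_⟩
      rcases Finset.mem_insert.1 hb with rfl | hb
      · exact htc
      · exact htB b hb
  obtain ⟨S₀, h1, h2⟩ := claim (attr R' ∩ attrsOf attr S)
    (fun b hb => Finset.mem_inter.1 hb)
  exact ⟨S₀, h1, fun a ha1 ha2 => h2 a (Finset.mem_inter.2 ⟨ha1, ha2⟩)⟩

end Cover

section Instance

universe w

open SimpleGraph

variable {ι α : Type} [Fintype ι] [DecidableEq ι] [DecidableEq α] {attr : ι → Finset α}
  {D : Type w}

/-- Extension step: a tuple of the output of `S` extends to `insert R' S`,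
given a covering relation `S₀ ∈ S` and full reducedness. -/
lemma extend_step_s5 (I : Inst attr D) (hFR : FullyReduced attr I) (S : Finset ι) (R' : ι)
    {S₀ : ι} (hS₀S : S₀ ∈ S)
    (hcov : ∀ a ∈ attr R', a ∈ attrsOf attr S → a ∈ attr S₀)
    (t : Tuple D (attrsOf attr S)) (ht : t ∈ output attr I S) :
    ∃ t' ∈ output attr I (insert R' S),
      restrict (attrsOf_mono attr (Finset.subset_insert R' S)) t' = t := by
  have ht₀ : restrict (attr_subset_attrsOf attr hS₀S) t ∈ I.rel S₀ := ht S₀ hS₀S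
  rw [hFR S₀] at ht₀
  obtain ⟨u, huF, hu⟩ := ht₀
  refine ⟨fun a => if h : a.1 ∈ attrsOf attr S then t ⟨a.1, h⟩
      else u ⟨a.1, attrsOf_mono attr (Finset.subset_univ _) a.2⟩, ?_, ?_⟩
  · intro R hR
    rcases Finset.mem_insert.1 hR with rfl | hRS
    · have hre : restrict (attr_subset_attrsOf attr hR)
          (fun a : {x // x ∈ attrsOf attr (insert R S)} =>
            if h : a.1 ∈ attrsOf attr S then t ⟨a.1, h⟩
            else u ⟨a.1, attrsOf_mono attr (Finset.subset_univ _) a.2⟩) =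
          restrict (attr_subset_attrsOf attr (Finset.mem_univ R)) u := by
        funext b
        by_cases hb : b.1 ∈ attrsOf attr S
        · have hbS₀ : b.1 ∈ attr S₀ := hcov b.1 b.2 hb
          have := congrFun hu ⟨b.1, hbS₀⟩
          simp only [restrict] at this ⊢
          rw [dif_pos hb]
          exact this.symm
        · simp only [restrict]
          rw [dif_neg hb]
      rw [hre]
      exact huF R (Finset.mem_univ R)
    · have hre : restrict (attr_subset_attrsOf attr hR)
          (fun a : {x // x ∈ attrsOf attr (insert R' S)} =>
            if h : a.1 ∈ attrsOf attr S then t ⟨a.1, h⟩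
            else u ⟨a.1, attrsOf_mono attr (Finset.subset_univ _) a.2⟩) =
          restrict (attr_subset_attrsOf attr hRS) t := by
        funext b
        have hb : b.1 ∈ attrsOf attr S := attr_subset_attrsOf attr hRS b.2
        simp only [restrict]
        rw [dif_pos hb]
      rw [hre]
      exact ht R hRS
  · funext a
    have ha : a.1 ∈ attrsOf attr S := a.2
    simp only [restrict]
    rw [dif_pos ha]

/-- Find an edge of the join graph leaving `S`. -/
lemma exists_exit {G : SimpleGraph ι} (S : Finset ι) :
    ∀ {x y : ι} (w : G.Walk x y), x ∈ S → y ∉ S →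
      ∃ P' R', P' ∈ S ∧ R' ∉ S ∧ G.Adj P' R' := by
  intro x y w
  induction w with
  | nil => exact fun hx hy => absurd hx hy
  | @cons a b c h wt ih =>
    intro hx hy
    by_cases hb : b ∈ S
    · exact ih hb hy
    · exact ⟨a, b, hx, hb, h⟩

/-- Main induction: every tuple of the output of a connected `S` extends to the
full output. -/
lemma grow (hconn : (joinGraph attr).Connected) (hγ : GammaAcyclic attr)
    (I : Inst attr D) (hFR : FullyReduced attr I) :
    ∀ (k : ℕ) (S : Finset ι), (Finset.univ (α := ι)).card - S.card ≤ k → S.Nonempty →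
      (∀ P ∈ S, ∀ Q ∈ S, ∃ w : (joinGraph attr).Walk P Q, ∀ x ∈ w.support, x ∈ S) →
      ∀ t ∈ output attr I S, ∃ u ∈ fullOutput attr I,
        restrict (attrsOf_mono attr (Finset.subset_univ S)) u = t := by
  intro k
  induction k with
  | zero =>
    intro S hk hne hwalk t ht
    have hSu : S = Finset.univ := by
      apply Finset.eq_univ_of_card
      have h1 := Finset.card_le_univ S
      rw [Finset.card_univ] at hk
      omega
    subst hSu
    exact ⟨t, ht, rfl⟩
  | succ k IH =>
    intro S hk hne hwalk t ht
    rcases eq_or_ne S Finset.univ with rfl | hSne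
    · exact ⟨t, ht, rfl⟩
    · have hv : ∃ v, v ∉ S := by
        by_contra hcon
        push_neg at hcon
        exact hSne (Finset.eq_univ_iff_forall.2 hcon)
      obtain ⟨v, hvS⟩ := hv
      obtain ⟨P, hP⟩ := id hne
      obtain ⟨w0⟩ := hconn.preconnected P v
      obtain ⟨P', R', hP'S, hR'S, hadj⟩ := exists_exit S w0 hP hvS
      obtain ⟨S₀, hS₀S, hcov⟩ := exists_cover hγ S hne hwalk R'
      obtain ⟨t', ht', hrt⟩ := extend_step_s5 I hFR S R' hS₀S hcov t ht
      have hne' : (insert R' S).Nonempty := ⟨R', Finset.mem_insert_self R' S⟩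
      have hwalk' : ∀ P₁ ∈ insert R' S, ∀ Q₁ ∈ insert R' S,
          ∃ w : (joinGraph attr).Walk P₁ Q₁, ∀ x ∈ w.support, x ∈ insert R' S := by
        have hws : ∀ Q₁ ∈ S, ∃ w : (joinGraph attr).Walk R' Q₁,
            ∀ x ∈ w.support, x ∈ insert R' S := by
          intro Q₁ hQ₁
          obtain ⟨w1, hw1⟩ := hwalk P' hP'S Q₁ hQ₁
          refine ⟨Walk.cons hadj.symm w1, ?_⟩
          intro x hx
          rw [Walk.support_cons] at hx
          rcases List.mem_cons.1 hx with rfl | hx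
          · exact Finset.mem_insert_self _ _
          · exact Finset.mem_insert_of_mem (hw1 x hx)
        intro P₁ hP₁ Q₁ hQ₁
        rcases Finset.mem_insert.1 hP₁ with rfl | hP₁S
        · rcases Finset.mem_insert.1 hQ₁ with rfl | hQ₁S
          · refine ⟨Walk.nil, ?_⟩
            intro x hx
            simp only [Walk.support_nil, List.mem_singleton] at hx
            subst hx
            exact Finset.mem_insert_self _ _
          · exact hws Q₁ hQ₁S
        · rcases Finset.mem_insert.1 hQ₁ with rfl | hQ₁S
          · obtain ⟨w1, hw1⟩ := hws P₁ hP₁S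
            refine ⟨w1.reverse, ?_⟩
            intro x hx
            rw [Walk.support_reverse, List.mem_reverse] at hx
            exact hw1 x hx
          · obtain ⟨w1, hw1⟩ := hwalk P₁ hP₁S Q₁ hQ₁S
            exact ⟨w1, fun x hx => Finset.mem_insert_of_mem (hw1 x hx)⟩
      have hk' : (Finset.univ (α := ι)).card - (insert R' S).card ≤ k := by
        rw [Finset.card_insert_of_notMem hR'S]
        omega
      obtain ⟨u, huF, hru⟩ := IH (insert R' S) hk' hne' hwalk' t' ht'
      refine ⟨u, huF, ?_⟩
      rw [← hrt, ← hru]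
      rfl

end Instance

/- STATEMENT 5 -/
theorem safe_of_gammaAcyclic {ι α : Type} [Fintype ι] [DecidableEq α]
    (attr : ι → Finset α) (hattr : ∀ R : ι, (attr R).Nonempty)
    (hconn : (joinGraph attr).Connected)
    (hγ : GammaAcyclic attr) :
    ∀ S : Finset ι, ConnectedSubjoin attr S → Safe.{v} attr S := by
  haveI : DecidableEq ι := Classical.decEq ι
  intro S hCS
  obtain ⟨hne, hconnS⟩ := hCS
  intro D I hFR
  have hwalk : ∀ P ∈ S, ∀ Q ∈ S,
      ∃ w : (joinGraph attr).Walk P Q, ∀ x ∈ w.support, x ∈ S := by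
    intro P hP Q hQ
    obtain ⟨w0⟩ := hconnS.preconnected ⟨P, by simpa using hP⟩ ⟨Q, by simpa using hQ⟩
    let emb : ((joinGraph attr).induce (↑S : Set ι)) ↪g joinGraph attr :=
      SimpleGraph.Embedding.induce _
    refine ⟨w0.map emb.toHom, ?_⟩
    intro x hx
    replace hx : x ∈ (w0.map emb.toHom).support := hx
    rw [SimpleGraph.Walk.support_map] at hx
    obtain ⟨y, _, rfl⟩ := List.mem_map.1 hx
    exact Finset.mem_coe.1 y.2
  ext t
  constructor
  · intro ht
    obtain ⟨u, huF, hru⟩ := grow hconn hγ I hFR (Finset.univ (α := ι)).card S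
      (Nat.sub_le _ _) hne hwalk t ht
    exact ⟨u, huF, hru⟩
  · rintro ⟨u, huF, rfl⟩
    intro R hR
    exact huF R (Finset.mem_univ R)

end JoinQuery
end

section
/- Let q be a natural join query with connected join graph. If every connected subjoin of q is safe, then every connected join expression θ of q is monotone on every fully reduced instance I. -/
namespace JoinQuery

universe v


theorem rels_nonempty {ι : Type} [DecidableEq ι] (θ : JoinExpr ι) : θ.rels.Nonempty := by
  induction θ with
  | leaf R => exact ⟨R, Finset.mem_singleton_self R⟩
  | node l r ihl ihr => exact ihl.mono (by simp [JoinExpr.rels])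

theorem induce_rels_connected {ι : Type} [DecidableEq ι] (G : SimpleGraph ι)
    (θ : JoinExpr ι) (h : JoinExpr.ConnectedExpr G θ) :
    (G.induce (θ.rels : Set ι)).Connected := by
  induction θ with
  | leaf R =>
      rw [SimpleGraph.connected_iff]
      refine ⟨fun a b => ?_, ⟨⟨R, by simp [JoinExpr.rels]⟩⟩⟩
      have ha : a.1 = R := by simpa [JoinExpr.rels] using a.2
      have hb : b.1 = R := by simpa [JoinExpr.rels] using b.2
      have : a = b := Subtype.ext (ha.trans hb.symm)
      rw [this]
  | node l r ihl ihr =>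
      obtain ⟨⟨R, hR, S, hS, hadj⟩, hl, hr⟩ := h
      have : ((l.node r).rels : Set ι) = (l.rels : Set ι) ∪ (r.rels : Set ι) := by
        simp [JoinExpr.rels]
      rw [this]
      exact SimpleGraph.connected_induce_union (ihl hl).preconnected (ihr hr).preconnected
        (by exact_mod_cast hR) (by exact_mod_cast hS) hadj

theorem restrict_restrict {α : Type} {D : Type u} {X Y Z : Finset α}
    (h1 : Z ⊆ Y) (h2 : Y ⊆ X) (t : Tuple D X) :
    restrict h1 (restrict h2 t) = restrict (h1.trans h2) t := rfl


/- STATEMENT 7 -/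
theorem monotone_of_safe {ι α : Type} [Fintype ι] [DecidableEq ι] [DecidableEq α]
    (attr : ι → Finset α) (hattr : ∀ R : ι, (attr R).Nonempty)
    (hconn : (joinGraph attr).Connected)
    (hsafe : ∀ S : Finset ι, ConnectedSubjoin attr S → Safe.{v} attr S) :
    ∀ θ : JoinExpr ι, θ.Complete → JoinExpr.ConnectedExpr (joinGraph attr) θ →
      ∀ (D : Type v) (I : Inst attr D), FullyReduced attr I →
        JoinExpr.MonotoneOn attr I θ := by
  intro θ _hc hce D I hred
  have key : ∀ θ' : JoinExpr ι, JoinExpr.ConnectedExpr (joinGraph attr) θ' →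
      output attr I θ'.rels =
        restrict (attrsOf_mono attr (Finset.subset_univ θ'.rels)) '' fullOutput attr I := by
    intro θ' h
    exact hsafe θ'.rels ⟨rels_nonempty θ', induce_rels_connected _ θ' h⟩ D I hred
  clear _hc
  induction θ with
  | leaf R => trivial
  | node l r ihl ihr =>
      obtain ⟨hadj, hl, hr⟩ := hce
      have hk := key (l.node r) ⟨hadj, hl, hr⟩
      simp only [JoinExpr.rels] at hk
      refine ⟨?_, ?_, ihl hl, ihr hr⟩
      · rw [key l hl, hk, Set.image_image]
        rfl
      · rw [key r hr, hk, Set.image_image]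
        rfl

end JoinQuery
end

section
/- Let q be a natural join query with connected join graph. If q is γ-acyclic, then every connected join expression of q is monotone on every fully reduced instance. -/
namespace JoinQuery

universe v

set_option linter.unusedSectionVars false
set_option linter.unusedVariables false

open SimpleGraph

section Aux

variable {ι : Type} {α : Type} [DecidableEq ι]

/-- Along a path ending in `A`, there is a first vertex belonging to `A`. -/
private lemma firstHit {G : SimpleGraph ι} :
    ∀ {v u : ι} (q : G.Walk v u), q.IsPath → ∀ (A : Set ι), u ∈ A →
    ∃ m, m ∈ A ∧ ∃ q₁ : G.Walk v m, q₁.IsPath ∧ (∀ x ∈ q₁.support, x ∈ q.support) ∧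
      (∀ x ∈ q₁.support, x ∈ A → x = m) := by
  intro v u q
  induction q with
  | nil =>
    intro _ A hu
    exact ⟨_, hu, Walk.nil, Walk.IsPath.nil, by simp, by simp⟩
  | @cons v c u h p ih =>
    intro hq A hu
    by_cases hv : v ∈ A
    · exact ⟨v, hv, Walk.nil, Walk.IsPath.nil, by simp, by simp⟩
    · obtain ⟨m, hm, q₁, hq₁, hsub, hfirst⟩ := ih hq.of_cons A hu
      refine ⟨m, hm, Walk.cons h q₁, ?_, ?_, ?_⟩
      · exact hq₁.cons (fun hvs => ((Walk.cons_isPath_iff h p).1 hq).2 (hsub _ hvs))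
      · intro x hx
        rw [Walk.support_cons, List.mem_cons] at hx
        rw [Walk.support_cons]
        rcases hx with rfl | hx
        · exact List.mem_cons_self
        · exact List.mem_cons_of_mem _ (hsub _ hx)
      · intro x hx hxA
        rw [Walk.support_cons, List.mem_cons] at hx
        rcases hx with rfl | hx
        · exact absurd hxA hv
        · exact hfirst x hx hxA

variable {T : SimpleGraph ι}

/-- The unique path between two vertices of a tree. -/
private noncomputable def tpath (hT : T.IsTree) (u v : ι) : T.Walk u v :=
  (hT.existsUnique_path u v).choose

private lemma tpath_isPath (hT : T.IsTree) (u v : ι) : (tpath hT u v).IsPath :=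
  (hT.existsUnique_path u v).choose_spec.1

private lemma tpath_unique (hT : T.IsTree) {u v : ι} (p : T.Walk u v) (hp : p.IsPath) :
    p = tpath hT u v :=
  (hT.existsUnique_path u v).choose_spec.2 p hp

private lemma mem_tpath_self (hT : T.IsTree) {u x : ι}
    (hx : x ∈ (tpath hT u u).support) : x = u := by
  have h := tpath_unique hT (Walk.nil : T.Walk u u) Walk.IsPath.nil
  rw [← h] at hx
  simpa using hx

private lemma tpath_support_trans (hT : T.IsTree) (u w v : ι) {x : ι}
    (hx : x ∈ (tpath hT u v).support) :
    x ∈ (tpath hT u w).support ∨ x ∈ (tpath hT w v).support := by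
  have h1 : ((tpath hT u w).append (tpath hT w v)).bypass = tpath hT u v :=
    tpath_unique hT _ (Walk.bypass_isPath _)
  rw [← h1] at hx
  have h2 := Walk.support_bypass_subset _ hx
  rw [Walk.mem_support_append_iff] at h2
  exact h2

/-- Median of three vertices in a tree: a vertex lying on all three connecting paths. -/
private lemma tree_median (hT : T.IsTree) (u v w : ι) :
    ∃ m, m ∈ (tpath hT u v).support ∧ m ∈ (tpath hT v w).support ∧
      m ∈ (tpath hT u w).support := by
  obtain ⟨m, hmA, q₁, hq₁, hsub, hfirst⟩ :=
    firstHit (tpath hT u v).reverse (tpath_isPath hT u v).reverse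
      {x | x ∈ (tpath hT u w).support} ((tpath hT u w).start_mem_support)
  have hm : m ∈ (tpath hT u w).support := hmA
  set r := tpath hT u w with hrdef
  have hr₂ : (r.dropUntil m hm).IsPath := (tpath_isPath hT u w).dropUntil hm
  have hmtail : m ∉ (r.dropUntil m hm).support.tail := by
    have hnd := hr₂.support_nodup
    rw [Walk.support_eq_cons] at hnd
    exact (List.nodup_cons.1 hnd).1
  have happ : (q₁.append (r.dropUntil m hm)).IsPath := by
    rw [Walk.isPath_def, Walk.support_append]
    refine List.Nodup.append hq₁.support_nodup
      ((List.tail_sublist _).nodup hr₂.support_nodup) ?_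
    intro x hx₁ hx₂
    have hx₃ : x ∈ r.support :=
      Walk.support_dropUntil_subset r hm (List.mem_of_mem_tail hx₂)
    have hxm : x = m := hfirst x hx₁ hx₃
    subst hxm
    exact hmtail hx₂
  have hQ : q₁.append (r.dropUntil m hm) = tpath hT v w := tpath_unique hT _ happ
  refine ⟨m, ?_, ?_, hm⟩
  · have := hsub m q₁.end_mem_support
    rw [Walk.support_reverse, List.mem_reverse] at this
    exact this
  · rw [← hQ, Walk.mem_support_append_iff]
    exact Or.inl q₁.end_mem_support

variable [DecidableEq α] {attr : ι → Finset α}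

/-- On the tree path between two relations containing an attribute, every relation
contains that attribute. -/
private lemma attr_tpath (hJT : IsJoinTree attr T) {A : α} {u v x : ι}
    (hu : A ∈ attr u) (hv : A ∈ attr v)
    (hx : x ∈ (tpath hJT.1.2 u v).support) : A ∈ attr x := by
  have hC := hJT.2 A ⟨u, hu⟩
  obtain ⟨p⟩ := hC.preconnected ⟨u, hu⟩ ⟨v, hv⟩
  have h1 : ((p.map (SimpleGraph.Embedding.induce {R : ι | A ∈ attr R}).toHom).bypass :
      T.Walk u v) = tpath hJT.1.2 u v :=
    tpath_unique hJT.1.2 _ (Walk.bypass_isPath _)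
  rw [← h1] at hx
  have hx2 := Walk.support_bypass_subset _ hx
  erw [Walk.support_map] at hx2
  obtain ⟨y, hy, rfl⟩ := List.mem_map.1 hx2
  exact y.2

/-- Decompose the tree path between the endpoints of a join-graph walk along
the edges of that walk. -/
private lemma tpath_seg (hT : T.IsTree) {G : SimpleGraph ι} :
    ∀ {u v : ι} (p : G.Walk u v) {x : ι}, x ∈ (tpath hT u v).support →
    (u = v ∧ x = u) ∨ ∃ (q q' : ι) (_ : G.Adj q q')
      (p₁ : G.Walk u q) (p₂ : G.Walk q' v),
      p₁.length + 1 + p₂.length = p.length ∧ (∀ y ∈ p₁.support, y ∈ p.support) ∧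
      (∀ y ∈ p₂.support, y ∈ p.support) ∧
      x ∈ (tpath hT q q').support := by
  intro u v p
  induction p with
  | nil => exact fun hx => Or.inl ⟨rfl, mem_tpath_self hT hx⟩
  | @cons u c v h p ih =>
    intro x hx
    have hcase1 : x ∈ (tpath hT u c).support →
        (u = v ∧ x = u) ∨ ∃ (q q' : ι) (_ : G.Adj q q')
          (p₁ : G.Walk u q) (p₂ : G.Walk q' v),
          p₁.length + 1 + p₂.length = (Walk.cons h p).length ∧
          (∀ y ∈ p₁.support, y ∈ (Walk.cons h p).support) ∧
          (∀ y ∈ p₂.support, y ∈ (Walk.cons h p).support) ∧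
          x ∈ (tpath hT q q').support := by
      intro hxc
      refine Or.inr ⟨u, c, h, Walk.nil, p, ?_, by simp, ?_, hxc⟩
      · simp only [Walk.length_nil, Walk.length_cons]
        omega
      · intro y hy
        rw [Walk.support_cons]
        exact List.mem_cons_of_mem _ hy
    rcases tpath_support_trans hT u c v hx with hxc | hxcv
    · exact hcase1 hxc
    · rcases ih hxcv with ⟨rfl, rfl⟩ | ⟨q, q', hqq, p₁, p₂, hlen, hs1, hs2, hxq⟩
      · exact hcase1 (Walk.end_mem_support _)
      · refine Or.inr ⟨q, q', hqq, Walk.cons h p₁, p₂, ?_, ?_, ?_, hxq⟩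
        · rw [Walk.length_cons, Walk.length_cons]
          omega
        · intro y hy
          rw [Walk.support_cons, List.mem_cons] at hy
          rw [Walk.support_cons]
          rcases hy with rfl | hy
          · exact List.mem_cons_self
          · exact List.mem_cons_of_mem _ (hs1 y hy)
        · intro y hy
          rw [Walk.support_cons]
          exact List.mem_cons_of_mem _ (hs2 y hy)

/-- Key combinatorial lemma: if `a`, `b` occur in relations of `S` connected by a walk
inside `S`, and some relation `m` contains both `a` and `b`, then some relation of `S`
contains both `a` and `b`. -/
private lemma pair_lemma (hJT : IsJoinTree attr T) (hγ : GammaAcyclic attr)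
    (S : Finset ι) :
    ∀ (n : ℕ) (u v : ι) (p : (joinGraph attr).Walk u v), p.length ≤ n →
      (∀ x ∈ p.support, x ∈ S) → ∀ (a b : α) (m : ι),
      a ∈ attr u → b ∈ attr v → a ∈ attr m → b ∈ attr m →
      ∃ R ∈ S, a ∈ attr R ∧ b ∈ attr R := by
  intro n
  induction n with
  | zero =>
    intro u v p hlen hsupp a b m ha hb _ _
    cases p with
    | nil => exact ⟨u, hsupp u (Walk.start_mem_support _), ha, hb⟩
    | cons h p' => rw [Walk.length_cons] at hlen; omega
  | succ n ih =>
    intro u v p hlen hsupp a b m ha hb hma hmb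
    cases p with
    | nil => exact ⟨u, hsupp u (Walk.start_mem_support _), ha, hb⟩
    | @cons _ c _ h p' =>
      by_cases hbu : b ∈ attr u
      · exact ⟨u, hsupp u (Walk.start_mem_support _), ha, hbu⟩
      by_cases hav : a ∈ attr v
      · exact ⟨v, hsupp v (Walk.end_mem_support _), hav, hb⟩
      obtain ⟨m', h1, h2, h3⟩ := tree_median hJT.1.2 u m v
      have ham' : a ∈ attr m' := attr_tpath hJT ha hma h1
      have hbm' : b ∈ attr m' := attr_tpath hJT hmb hb h2
      rcases tpath_seg hJT.1.2 (Walk.cons h p') h3 with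
        ⟨huv, _⟩ | ⟨q, q', hqq, p₁, p₂, hlen', hs1, hs2, hm'qq⟩
      · exact absurd (huv ▸ hb) hbu
      · obtain ⟨cA, hcA⟩ := hqq.2
        rw [Finset.mem_inter] at hcA
        have hcm' : cA ∈ attr m' := attr_tpath hJT hcA.1 hcA.2 hm'qq
        rw [Walk.length_cons] at hlen hlen'
        have hlen1 : p₁.length ≤ n := by omega
        have hlen2 : p₂.length ≤ n := by omega
        obtain ⟨R₁, hR₁S, haR₁, hcR₁⟩ :=
          ih u q p₁ hlen1 (fun x hx => hsupp x (hs1 x hx)) a cA m' ha hcA.1 ham' hcm'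
        obtain ⟨R₂, hR₂S, hcR₂, hbR₂⟩ :=
          ih q' v p₂ hlen2 (fun x hx => hsupp x (hs2 x hx)) cA b m' hcA.2 hb hcm' hbm'
        by_cases hbR₁ : b ∈ attr R₁
        · exact ⟨R₁, hR₁S, haR₁, hbR₁⟩
        by_cases haR₂ : a ∈ attr R₂
        · exact ⟨R₂, hR₂S, haR₂, hbR₂⟩
        by_cases hm'S : m' ∈ S
        · exact ⟨m', hm'S, ham', hbm'⟩
        exfalso
        refine hγ.2 ⟨R₁, R₂, m', a, cA, b, ?_, ?_, ?_, ?_, ?_, ?_,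
          haR₁, hcR₁, hcR₂, hbR₂, ham', hcm', hbm'⟩
        · exact fun hEq => hbR₁ (hEq ▸ hbR₂)
        · exact fun hEq => hm'S (hEq ▸ hR₁S)
        · exact fun hEq => hm'S (hEq ▸ hR₂S)
        · exact fun hEq => haR₂ (hEq ▸ hcR₂)
        · exact fun hEq => hbR₁ (hEq ▸ haR₁)
        · exact fun hEq => hbR₁ (hEq ▸ hcR₁)

/-- The claim: the intersection of the attributes of any relation with the attributes of a
connected set `S` of relations is contained in the attribute set of a single member of `S`. -/
private lemma claim_lemma (hJT : IsJoinTree attr T) (hγ : GammaAcyclic attr)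
    {S : Finset ι} (hS : S.Nonempty)
    (hW : ∀ x ∈ S, ∀ y ∈ S, ∃ p : (joinGraph attr).Walk x y, ∀ z ∈ p.support, z ∈ S)
    (Tr : ι) : ∃ R ∈ S, attr Tr ∩ attrsOf attr S ⊆ attr R := by
  set X := attr Tr ∩ attrsOf attr S with hX
  have PW : ∀ a ∈ X, ∀ b ∈ X, ∃ R ∈ S, a ∈ attr R ∧ b ∈ attr R := by
    intro a ha b hb
    rw [hX, Finset.mem_inter] at ha hb
    obtain ⟨Qa, hQa, haQ⟩ := Finset.mem_biUnion.1 ha.2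
    obtain ⟨Qb, hQb, hbQ⟩ := Finset.mem_biUnion.1 hb.2
    obtain ⟨p, hp⟩ := hW Qa hQa Qb hQb
    exact pair_lemma hJT hγ S p.length Qa Qb p le_rfl hp a b Tr haQ hbQ ha.1 hb.1
  obtain ⟨R, hR, hmax⟩ := S.exists_max_image (fun R => (attr R ∩ X).card) hS
  refine ⟨R, hR, fun x hx => ?_⟩
  by_contra hxR
  have hxA : x ∈ X := hx
  have hy : ∃ y, y ∈ attr R ∩ X := by
    by_contra hno
    push_neg at hno
    obtain ⟨R', hR', hxR', _⟩ := PW x hxA x hxA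
    have hle : (attr R' ∩ X).card ≤ (attr R ∩ X).card := hmax R' hR'
    have h0 : attr R ∩ X = ∅ := Finset.eq_empty_iff_forall_notMem.2 hno
    rw [h0, Finset.card_empty, Nat.le_zero, Finset.card_eq_zero] at hle
    have hxin : x ∈ attr R' ∩ X := Finset.mem_inter.2 ⟨hxR', hxA⟩
    rw [hle] at hxin
    exact absurd hxin (Finset.notMem_empty x)
  obtain ⟨y, hyRX⟩ := hy
  rw [Finset.mem_inter] at hyRX
  obtain ⟨R', hR'S, hxR', hyR'⟩ := PW x hxA y hyRX.2
  have hz : ∃ z, z ∈ attr R ∩ X ∧ z ∉ attr R' := by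
    by_contra hno
    push_neg at hno
    have hss : attr R ∩ X ⊂ attr R' ∩ X := by
      refine ⟨fun z hzz => Finset.mem_inter.2 ⟨hno z hzz, (Finset.mem_inter.1 hzz).2⟩, ?_⟩
      intro hsup
      exact hxR (Finset.mem_inter.1 (hsup (Finset.mem_inter.2 ⟨hxR', hxA⟩))).1
    exact absurd (hmax R' hR'S) (not_le.2 (Finset.card_lt_card hss))
  obtain ⟨z, hzRX, hzR'⟩ := hz
  rw [Finset.mem_inter] at hzRX
  have hxT : x ∈ attr Tr := (Finset.mem_inter.1 hxA).1
  have hyT : y ∈ attr Tr := (Finset.mem_inter.1 hyRX.2).1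
  have hzT : z ∈ attr Tr := (Finset.mem_inter.1 hzRX.2).1
  refine hγ.2 ⟨R', R, Tr, x, y, z, ?_, ?_, ?_, ?_, ?_, ?_,
    hxR', hyR', hyRX.1, hzRX.1, hxT, hyT, hzT⟩
  · exact fun hEq => hxR (hEq ▸ hxR')
  · exact fun hEq => hzR' (hEq ▸ hzT)
  · exact fun hEq => hxR (hEq ▸ hxT)
  · exact fun hEq => hxR (hEq ▸ hyRX.1)
  · exact fun hEq => hxR (hEq ▸ hzRX.1)
  · exact fun hEq => hzR' (hEq ▸ hyR')

end Aux

section Safe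

variable {ι : Type} {α : Type} [Fintype ι] [DecidableEq ι] [DecidableEq α]
variable {attr : ι → Finset α}

private lemma output_superset {D : Type v} (I : Inst attr D) (S : Finset ι) :
    restrict (attrsOf_mono attr (Finset.subset_univ S)) '' fullOutput attr I ⊆
      output attr I S := by
  rintro t ⟨w, hw, rfl⟩ R hR
  exact hw R (Finset.mem_univ R)

private lemma safe_univ {D : Type v} (I : Inst attr D) :
    output attr I (Finset.univ : Finset ι) =
      restrict (attrsOf_mono attr (Finset.subset_univ Finset.univ)) '' fullOutput attr I := by
  have h : restrict (attrsOf_mono attr (Finset.subset_univ (Finset.univ : Finset ι))) =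
      (id : Tuple D _ → _) := rfl
  rw [h, Set.image_id]
  rfl

private lemma cross_lemma {G : SimpleGraph ι} (S : Finset ι) :
    ∀ {s t : ι} (_ : G.Walk s t), s ∈ S → t ∉ S →
      ∃ q q', q ∈ S ∧ q' ∉ S ∧ G.Adj q q' := by
  intro s t p
  induction p with
  | nil => exact fun hs ht => absurd hs ht
  | @cons s c t h p ih =>
    intro hs ht
    by_cases hc : c ∈ S
    · exact ih hc ht
    · exact ⟨s, c, hs, hc, h⟩

private lemma safe_lemma {T : SimpleGraph ι}
    (hconn : (joinGraph attr).Connected) (hγ : GammaAcyclic attr)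
    (hJT : IsJoinTree attr T) {D : Type v} (I : Inst attr D)
    (hFR : FullyReduced attr I) :
    ∀ (n : ℕ) (S : Finset ι), Sᶜ.card ≤ n → S.Nonempty →
      (∀ x ∈ S, ∀ y ∈ S, ∃ p : (joinGraph attr).Walk x y, ∀ z ∈ p.support, z ∈ S) →
      output attr I S =
        restrict (attrsOf_mono attr (Finset.subset_univ S)) '' fullOutput attr I := by
  intro n
  induction n with
  | zero =>
    intro S hcard _ _
    have hc : Sᶜ = ∅ := Finset.card_eq_zero.1 (Nat.le_zero.1 hcard)
    have hU : S = Finset.univ := (Finset.compl_eq_empty_iff S).1 hc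
    subst hU
    exact safe_univ I
  | succ n ih =>
    intro S hcard hSne hW
    by_cases hU : S = Finset.univ
    · subst hU; exact safe_univ I
    · have hex : ∃ t, t ∉ S := by
        by_contra hno
        push_neg at hno
        exact hU (Finset.eq_univ_iff_forall.2 hno)
      obtain ⟨t0, ht0⟩ := hex
      have hSne2 := hSne
      obtain ⟨s0, hs0⟩ := hSne2
      obtain ⟨p0⟩ := hconn.preconnected s0 t0
      obtain ⟨R₀, Tr, hR₀S, hTrS, hadj⟩ := cross_lemma S p0 hs0 ht0
      set S' := insert Tr S with hS'def
      have hTrS' : Tr ∈ S' := Finset.mem_insert_self Tr S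
      have hSS' : S ⊆ S' := Finset.subset_insert Tr S
      have hto : ∀ y ∈ S, ∃ p : (joinGraph attr).Walk Tr y, ∀ z ∈ p.support, z ∈ S' := by
        intro y hy
        obtain ⟨p1, hp1⟩ := hW R₀ hR₀S y hy
        refine ⟨Walk.cons hadj.symm p1, ?_⟩
        intro z hz
        rw [Walk.support_cons, List.mem_cons] at hz
        rcases hz with rfl | hz
        · exact hTrS'
        · exact hSS' (hp1 z hz)
      have hW' : ∀ x ∈ S', ∀ y ∈ S',
          ∃ p : (joinGraph attr).Walk x y, ∀ z ∈ p.support, z ∈ S' := by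
        intro x hx y hy
        rcases Finset.mem_insert.1 hx with rfl | hxS
        · rcases Finset.mem_insert.1 hy with rfl | hyS
          · exact ⟨Walk.nil, by simpa using hTrS'⟩
          · exact hto y hyS
        · rcases Finset.mem_insert.1 hy with rfl | hyS
          · obtain ⟨p1, hp1⟩ := hto x hxS
            refine ⟨p1.reverse, ?_⟩
            intro z hz
            rw [Walk.support_reverse, List.mem_reverse] at hz
            exact hp1 z hz
          · obtain ⟨p1, hp1⟩ := hW x hxS y hyS
            exact ⟨p1, fun z hz => hSS' (hp1 z hz)⟩
      have hcard' : S'ᶜ.card ≤ n := by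
        rw [hS'def, Finset.compl_insert,
          Finset.card_erase_of_mem (Finset.mem_compl.2 hTrS)]
        omega
      have hout' := ih S' hcard' ⟨Tr, hTrS'⟩ hW'
      refine Set.Subset.antisymm ?_ (output_superset I S)
      intro t ht
      obtain ⟨Rc, hRcS, hXR⟩ := claim_lemma hJT hγ hSne hW Tr
      have h1 : restrict (attr_subset_attrsOf attr hRcS) t ∈ I.rel Rc := ht Rc hRcS
      rw [hFR Rc] at h1
      obtain ⟨w, hwfull, hweq⟩ := h1
      set t' : Tuple D (attrsOf attr S') := fun a =>
        if h : a.1 ∈ attrsOf attr S then t ⟨a.1, h⟩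
        else w ⟨a.1, attrsOf_mono attr (Finset.subset_univ S') a.2⟩ with ht'def
      have ht' : t' ∈ output attr I S' := by
        intro R' hR'
        rcases Finset.mem_insert.1 hR' with rfl | hR'S
        · have hEq : restrict (attr_subset_attrsOf attr hR') t' =
              restrict (attr_subset_attrsOf attr (Finset.mem_univ R')) w := by
            funext a
            show t' ⟨a.1, _⟩ = w ⟨a.1, _⟩
            rw [ht'def]
            by_cases hin : a.1 ∈ attrsOf attr S
            · simp only [dif_pos hin]
              have hmem : a.1 ∈ attr Rc := hXR (Finset.mem_inter.2 ⟨a.2, hin⟩)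
              exact (congrFun hweq ⟨a.1, hmem⟩).symm
            · simp only [dif_neg hin]
          rw [hEq]
          exact hwfull R' (Finset.mem_univ R')
        · have hEq : restrict (attr_subset_attrsOf attr hR') t' =
              restrict (attr_subset_attrsOf attr hR'S) t := by
            funext a
            show t' ⟨a.1, _⟩ = t ⟨a.1, _⟩
            rw [ht'def]
            simp only [dif_pos (attr_subset_attrsOf attr hR'S a.2)]
          rw [hEq]
          exact ht R' hR'S
      rw [hout'] at ht'
      obtain ⟨w', hw'full, hw'eq⟩ := ht'
      refine ⟨w', hw'full, ?_⟩
      funext a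
      have ha' : a.1 ∈ attrsOf attr S' := attrsOf_mono attr hSS' a.2
      have h2 : restrict (attrsOf_mono attr (Finset.subset_univ S)) w' a
          = t' ⟨a.1, ha'⟩ := congrFun hw'eq ⟨a.1, ha'⟩
      rw [h2, ht'def]
      simp only [dif_pos a.2]

end Safe

section Assemble

variable {ι : Type} {α : Type} [Fintype ι] [DecidableEq ι] [DecidableEq α]
variable {attr : ι → Finset α}

private lemma walks_of_connectedExpr :
    ∀ (θ : JoinExpr ι), JoinExpr.ConnectedExpr (joinGraph attr) θ →
      θ.rels.Nonempty ∧ ∀ x ∈ θ.rels, ∀ y ∈ θ.rels,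
        ∃ p : (joinGraph attr).Walk x y, ∀ z ∈ p.support, z ∈ θ.rels := by
  intro θ
  induction θ with
  | leaf R =>
    intro _
    refine ⟨⟨R, by simp [JoinExpr.rels]⟩, ?_⟩
    intro x hx y hy
    simp only [JoinExpr.rels, Finset.mem_singleton] at hx hy
    subst hx; subst hy
    exact ⟨Walk.nil, by simp [JoinExpr.rels]⟩
  | node l r ihl ihr =>
    rintro ⟨⟨Rl, hRl, Rr, hRr, hadj⟩, hcl, hcr⟩
    obtain ⟨hnl, hwl⟩ := ihl hcl
    obtain ⟨hnr, hwr⟩ := ihr hcr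
    have hrels : (JoinExpr.node l r).rels = l.rels ∪ r.rels := rfl
    have hsubl : l.rels ⊆ (JoinExpr.node l r).rels := by
      rw [hrels]; exact Finset.subset_union_left
    have hsubr : r.rels ⊆ (JoinExpr.node l r).rels := by
      rw [hrels]; exact Finset.subset_union_right
    refine ⟨⟨Rl, hsubl hRl⟩, ?_⟩
    have hacross : ∀ x ∈ l.rels, ∀ y ∈ r.rels,
        ∃ p : (joinGraph attr).Walk x y, ∀ z ∈ p.support, z ∈ (JoinExpr.node l r).rels := by
      intro x hx y hy
      obtain ⟨p1, hp1⟩ := hwl x hx Rl hRl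
      obtain ⟨p2, hp2⟩ := hwr Rr hRr y hy
      refine ⟨p1.append (Walk.cons hadj p2), ?_⟩
      intro z hz
      rw [Walk.mem_support_append_iff] at hz
      rcases hz with hz | hz
      · exact hsubl (hp1 z hz)
      · rw [Walk.support_cons, List.mem_cons] at hz
        rcases hz with rfl | hz
        · exact hsubl hRl
        · exact hsubr (hp2 z hz)
    intro x hx y hy
    rw [hrels, Finset.mem_union] at hx hy
    rcases hx with hx | hx
    · rcases hy with hy | hy
      · obtain ⟨p1, hp1⟩ := hwl x hx y hy
        exact ⟨p1, fun z hz => hsubl (hp1 z hz)⟩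
      · exact hacross x hx y hy
    · rcases hy with hy | hy
      · obtain ⟨p1, hp1⟩ := hacross y hy x hx
        refine ⟨p1.reverse, ?_⟩
        intro z hz
        rw [Walk.support_reverse, List.mem_reverse] at hz
        exact hp1 z hz
      · obtain ⟨p1, hp1⟩ := hwr x hx y hy
        exact ⟨p1, fun z hz => hsubr (hp1 z hz)⟩

private lemma mono_aux {T : SimpleGraph ι}
    (hconn : (joinGraph attr).Connected) (hγ : GammaAcyclic attr)
    (hJT : IsJoinTree attr T) {D : Type v} (I : Inst attr D)
    (hFR : FullyReduced attr I) :
    ∀ (θ : JoinExpr ι), JoinExpr.ConnectedExpr (joinGraph attr) θ →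
      JoinExpr.MonotoneOn attr I θ := by
  intro θ
  induction θ with
  | leaf R => exact fun _ => trivial
  | node l r ihl ihr =>
    rintro ⟨hadj, hcl, hcr⟩
    obtain ⟨hnl, hwl⟩ := walks_of_connectedExpr l hcl
    obtain ⟨hnu, hwu⟩ := walks_of_connectedExpr (JoinExpr.node l r) ⟨hadj, hcl, hcr⟩
    obtain ⟨hnr, hwr⟩ := walks_of_connectedExpr r hcr
    have hsafel := safe_lemma hconn hγ hJT I hFR (l.rels)ᶜ.card l.rels le_rfl hnl hwl
    have hsafer := safe_lemma hconn hγ hJT I hFR (r.rels)ᶜ.card r.rels le_rfl hnr hwr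
    have hsafeu := safe_lemma hconn hγ hJT I hFR ((JoinExpr.node l r).rels)ᶜ.card
      (JoinExpr.node l r).rels le_rfl hnu hwu
    have hu : (JoinExpr.node l r).rels = l.rels ∪ r.rels := rfl
    rw [hu] at hsafeu
    refine ⟨?_, ?_, ihl hcl, ihr hcr⟩
    · rw [hsafel, hsafeu, Set.image_image]
      rfl
    · rw [hsafer, hsafeu, Set.image_image]
      rfl

end Assemble

/- STATEMENT 9 -/
theorem monotone_of_gammaAcyclic {ι α : Type} [Fintype ι] [DecidableEq ι] [DecidableEq α]
    (attr : ι → Finset α) (hattr : ∀ R : ι, (attr R).Nonempty)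
    (hconn : (joinGraph attr).Connected)
    (hγ : GammaAcyclic attr) :
    ∀ θ : JoinExpr ι, θ.Complete → JoinExpr.ConnectedExpr (joinGraph attr) θ →
      ∀ (D : Type v) (I : Inst attr D), FullyReduced attr I →
        JoinExpr.MonotoneOn attr I θ := by
  obtain ⟨TJ, hJT⟩ := hγ.1
  intro θ _ hce D I hFR
  exact mono_aux hconn hγ hJT I hFR θ hce

end JoinQuery
end
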